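/- arXiv:2103.08818 — 8 statements merged into one kernel-verified Lean document; each statement's English description precedes it below -/
import Mathlib

section
/- A 2×2 density matrix ρ on ℂ^2 is assisted maximally coherent (AMC) if and only if both diagonal entries of ρ equal 1/2. -/
open Matrix
open scoped ComplexOrder

/-- A unit vector `ψ ∈ ℂ^n` is *maximally coherent* (w.r.t. the standard basis)
if `|ψ i| = 1/√n` for every index `i`. -/
def MaxCoherent {n : ℕ} (ψ : Fin n → ℂ) : Prop :=
  ∀ i, ‖ψ i‖ = 1 / Real.sqrt n

/-- A density matrix `ρ` on `ℂ^n` is *assisted maximally coherent* (AMC) if it is a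
finite convex combination of projections `ψ ψ†` onto maximally coherent unit vectors. -/
def IsAMC {n : ℕ} (ρ : Matrix (Fin n) (Fin n) ℂ) : Prop :=
  ∃ (m : ℕ) (p : Fin m → ℝ) (ψ : Fin m → Fin n → ℂ),
    (∀ k, 0 ≤ p k) ∧ (∑ k, p k = 1) ∧ (∀ k, MaxCoherent (ψ k)) ∧
    ρ = ∑ k, (p k : ℂ) • Matrix.vecMulVec (ψ k) (star (ψ k))

theorem amc_iff_diagonal_dim_two (ρ : Matrix (Fin 2) (Fin 2) ℂ)
    (hpsd : ρ.PosSemidef) (htr : ρ.trace = 1) :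
    IsAMC ρ ↔ ∀ i, ρ i i = (1 : ℂ) / 2 := by
  constructor
  · rintro ⟨m, p, ψ, hp, hsum, hmc, rfl⟩ i
    have h1 : ∀ k, ψ k i * star (ψ k i) = (1/2 : ℂ) := by
      intro k
      have h := hmc k i
      have h2 : ‖ψ k i‖ ^ 2 = 1/2 := by
        rw [h, Nat.cast_ofNat, div_pow, Real.sq_sqrt] <;> norm_num
      rw [show (star (ψ k i)) = (starRingEnd ℂ) (ψ k i) from rfl, Complex.mul_conj,
        ← Complex.sq_norm, h2]
      norm_num
    simp only [Matrix.sum_apply, Matrix.smul_apply, vecMulVec_apply, Pi.star_apply,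
      smul_eq_mul, h1]
    rw [← Finset.sum_mul, ← Complex.ofReal_sum, hsum]
    norm_num
  · intro hdiag
    set c : ℂ := ρ 0 1 with hc
    set r : ℝ := ‖c‖ with hr
    have hr0 : 0 ≤ r := norm_nonneg c
    have hherm := hpsd.1
    have h10 : ρ 1 0 = (starRingEnd ℂ) c := by
      rw [← hherm.apply 1 0]; rfl
    set u : ℂ := if c = 0 then 1 else (starRingEnd ℂ) c / r with hu
    have huu : u * (starRingEnd ℂ) u = 1 := by
      by_cases h : c = 0
      · simp [hu, h]
      · have hrne : (r:ℂ) ≠ 0 := by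
          simpa [Complex.ofReal_eq_zero, hr] using norm_ne_zero_iff.mpr h
        simp only [hu, if_neg h]
        rw [map_div₀, Complex.conj_conj, Complex.conj_ofReal,
          div_mul_div_comm, mul_comm ((starRingEnd ℂ) c) c, Complex.mul_conj,
          Complex.normSq_eq_norm_sq, ← hr]
        push_cast
        field_simp
    have hcu : c * u = (r : ℂ) := by
      by_cases h : c = 0
      · simp [h, hr, hc.symm ▸ h]
      · have hrne : (r:ℂ) ≠ 0 := by
          simpa [Complex.ofReal_eq_zero, hr] using norm_ne_zero_iff.mpr h
        simp only [hu, if_neg h]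
        rw [mul_div_assoc', Complex.mul_conj, Complex.normSq_eq_norm_sq, ← hr]
        push_cast
        field_simp
    have hkey : (r : ℂ) * (starRingEnd ℂ) u = c := by
      calc (r:ℂ) * (starRingEnd ℂ) u = (c * u) * (starRingEnd ℂ) u := by rw [hcu]
        _ = c * (u * (starRingEnd ℂ) u) := by ring
        _ = c := by rw [huu]; ring
    have hkey2 : (r : ℂ) * u = (starRingEnd ℂ) c := by
      have := congrArg (starRingEnd ℂ) hkey
      rwa [_root_.map_mul, Complex.conj_ofReal, Complex.conj_conj] at this
    -- r ≤ 1/2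
    have hrle : r ≤ 1/2 := by
      have h := hpsd.dotProduct_mulVec_nonneg ![1, -u]
      simp only [dotProduct, mulVec, Fin.sum_univ_two, Matrix.cons_val_zero,
        Matrix.cons_val_one, Matrix.head_cons, Pi.star_apply, star_one, star_neg,
        one_mul, mul_one] at h
      rw [show (star u) = (starRingEnd ℂ) u from rfl, hdiag 0, hdiag 1, h10, ← hc] at h
      have key : (1/2 : ℂ) + c * -u + -(starRingEnd ℂ) u * ((starRingEnd ℂ) c + 1/2 * -u)
          = ((1 - 2*r : ℝ) : ℂ) := by
        have h4 : (starRingEnd ℂ) u * u = 1 := by rw [mul_comm]; exact huu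
        have h5 : (starRingEnd ℂ) u * (starRingEnd ℂ) c = (r:ℂ) := by
          rw [mul_comm, ← hkey2, mul_assoc, huu, mul_one]
        push_cast
        calc (1/2 : ℂ) + c * -u + -(starRingEnd ℂ) u * ((starRingEnd ℂ) c + 1/2 * -u)
            = 1 - c * u - (starRingEnd ℂ) u * (starRingEnd ℂ) c
              + (1/2) * ((starRingEnd ℂ) u * u) - 1/2 := by ring
          _ = 1 - 2 * (r:ℂ) := by rw [hcu, h4, h5]; ring
      rw [key] at h
      have := Complex.zero_le_real.mp h
      linarith
    -- construct the decomposition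
    set s : ℂ := (((Real.sqrt 2)⁻¹ : ℝ) : ℂ) with hsdef
    have hs2 : s * s = 1/2 := by
      rw [hsdef]
      norm_cast
      rw [← mul_inv, Real.mul_self_sqrt] <;> norm_num
    have hconjs : (starRingEnd ℂ) s = s := Complex.conj_ofReal _
    refine ⟨2, ![(1 + 2*r)/2, (1 - 2*r)/2],
      ![![s, u * s], ![s, -(u * s)]], ?_, ?_, ?_, ?_⟩
    · intro k
      fin_cases k <;> simp <;> linarith
    · simp [Fin.sum_univ_two]; ring
    · intro k
      have habs : ‖u‖ = 1 := by
        have h := congrArg (‖·‖) huu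
        rw [norm_mul, Complex.norm_conj, norm_one] at h
        nlinarith [norm_nonneg u]
      have h2 : ‖s‖ = 1 / Real.sqrt 2 := by
        rw [hsdef, Complex.norm_real, Real.norm_eq_abs, abs_of_nonneg (by positivity), one_div]
      fin_cases k <;> intro i <;> fin_cases i <;>
        simp [MaxCoherent, norm_mul, habs, h2, Nat.cast_ofNat]
    · funext i j
      fin_cases i <;> fin_cases j <;>
        simp only [Matrix.sum_apply, Matrix.smul_apply, vecMulVec_apply, Pi.star_apply,
          Fin.sum_univ_two, Fin.mk_zero, Fin.mk_one, Matrix.cons_val_zero,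
          Matrix.cons_val_one, Matrix.head_cons, smul_eq_mul, Complex.star_def,
          map_neg, _root_.map_mul, hconjs]
      · rw [hdiag 0]
        push_cast
        linear_combination -hs2
      · rw [← hc, ← hkey]
        push_cast
        linear_combination (-2*(r:ℂ)*((starRingEnd ℂ) u)) * hs2
      · rw [h10, ← hkey2]
        push_cast
        linear_combination (-2*(r:ℂ)*u) * hs2
      · rw [hdiag 1]
        push_cast
        linear_combination (-(s*s)) * huu - hs2
end

section
/- For any n×n density matrix ρ = (ρ_ij) on ℂ^n, the associated Schmidt correlated state ρ_mc = Σ_{i,j} ρ_ij |ii⟩⟨jj| on ℂ^n ⊗ ℂ^n is assisted maximally entangled (AME) if and only if ρ is assisted maximally coherent (AMC). -/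
open Matrix
open scoped ComplexOrder

/-- The coefficient matrix of a vector `Ψ ∈ ℂ^n ⊗ ℂ^n` (identified with `ℂ^{n×n}`
via the standard product basis): `A i j = Ψ (i,j)`. -/
def coeffMatrix {n : ℕ} (Ψ : Fin n × Fin n → ℂ) : Matrix (Fin n) (Fin n) ℂ :=
  Matrix.of fun i j => Ψ (i, j)

/-- A unit vector `Ψ ∈ ℂ^n ⊗ ℂ^n` is *maximally entangled* if its coefficient matrix `A`
satisfies `A Aᴴ = (1/n) I`. -/
def MaxEntangled {n : ℕ} (Ψ : Fin n × Fin n → ℂ) : Prop :=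
  coeffMatrix Ψ * (coeffMatrix Ψ)ᴴ = (n : ℂ)⁻¹ • 1

/-- A density matrix on `ℂ^n ⊗ ℂ^n` is *assisted maximally entangled* (AME) if it is a
finite convex combination of projections onto maximally entangled unit vectors. -/
def IsAME {n : ℕ} (ρ : Matrix (Fin n × Fin n) (Fin n × Fin n) ℂ) : Prop :=
  ∃ (m : ℕ) (p : Fin m → ℝ) (Ψ : Fin m → Fin n × Fin n → ℂ),
    (∀ k, 0 ≤ p k) ∧ (∑ k, p k = 1) ∧ (∀ k, MaxEntangled (Ψ k)) ∧
    ρ = ∑ k, (p k : ℂ) • Matrix.vecMulVec (Ψ k) (star (Ψ k))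

/-- The Schmidt correlated state `ρ_mc = Σ_{i,j} ρ_ij |ii⟩⟨jj|` on `ℂ^n ⊗ ℂ^n`
associated to a matrix `ρ = (ρ_ij)` on `ℂ^n`. -/
def schmidtCorrelated {n : ℕ} (ρ : Matrix (Fin n) (Fin n) ℂ) :
    Matrix (Fin n × Fin n) (Fin n × Fin n) ℂ :=
  Matrix.of fun a b => if a.1 = a.2 ∧ b.1 = b.2 then ρ a.1 b.1 else 0

theorem schmidtCorrelated_ame_iff_amc {n : ℕ} (ρ : Matrix (Fin n) (Fin n) ℂ)
    (hpsd : ρ.PosSemidef) (htr : ρ.trace = 1) :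
    IsAME (schmidtCorrelated ρ) ↔ IsAMC ρ := by
  have hn : 0 < n := by
    by_contra h
    interval_cases n
    simp [Matrix.trace] at htr
  have hnR : (0:ℝ) < (n:ℝ) := by exact_mod_cast hn
  constructor
  · rintro ⟨m, p, Ψ, hp, hsum, hme, hrho⟩
    -- off-diagonal components vanish for weights with p k ≠ 0
    have key : ∀ i j : Fin n, i ≠ j → ∀ k, p k ≠ 0 → Ψ k (i, j) = 0 := by
      intro i j hij k hk
      have h := congrFun (congrFun hrho (i, j)) (i, j)
      simp only [schmidtCorrelated, Matrix.of_apply, hij, and_self, if_false,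
        Matrix.sum_apply, Matrix.smul_apply, Matrix.vecMulVec_apply, Pi.star_apply,
        Complex.star_def, Complex.mul_conj, smul_eq_mul] at h
      have h' : (0:ℝ) = ∑ l, p l * Complex.normSq (Ψ l (i, j)) := by
        have : ((0:ℝ):ℂ) = ((∑ l, p l * Complex.normSq (Ψ l (i, j)) : ℝ) : ℂ) := by
          push_cast
          simpa using h
        exact_mod_cast this
      have hall := (Finset.sum_eq_zero_iff_of_nonneg (fun l _ =>
        mul_nonneg (hp l) (Complex.normSq_nonneg _))).1 h'.symm k (Finset.mem_univ k)
      have : Complex.normSq (Ψ k (i, j)) = 0 := by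
        rcases mul_eq_zero.1 hall with h1 | h1
        · exact absurd h1 hk
        · exact h1
      exact Complex.normSq_eq_zero.1 this
    refine ⟨m, p, fun k => if p k = 0 then (fun _ => (((Real.sqrt n)⁻¹ : ℝ) : ℂ))
      else fun i => Ψ k (i, i), hp, hsum, ?_, ?_⟩
    · intro k i
      by_cases hk : p k = 0
      · simp only [hk, if_true]
        rw [Complex.norm_real, Real.norm_of_nonneg (by positivity), one_div]
      · simp only [hk, if_false]
        have h := congrFun (congrFun (hme k) i) i
        simp only [coeffMatrix, Matrix.mul_apply, Matrix.conjTranspose_apply, Matrix.of_apply,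
          Matrix.smul_apply, Matrix.one_apply_eq, smul_eq_mul, mul_one] at h
        rw [Finset.sum_eq_single i (fun l _ hl => by
          rw [key i l (Ne.symm hl) k hk]; simp) (by simp)] at h
        rw [Complex.star_def, Complex.mul_conj] at h
        have hns : Complex.normSq (Ψ k (i, i)) = (n:ℝ)⁻¹ := by
          have h2 : ((Complex.normSq (Ψ k (i, i)) : ℝ) : ℂ) = (((n:ℝ)⁻¹ : ℝ) : ℂ) := by
            push_cast
            exact h
          exact_mod_cast h2
        rw [Complex.norm_def, hns, Real.sqrt_inv, one_div]
    · ext i j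
      have h := congrFun (congrFun hrho ((i, i))) ((j, j))
      simp only [schmidtCorrelated, Matrix.of_apply, and_self, if_true,
        Matrix.sum_apply, Matrix.smul_apply, Matrix.vecMulVec_apply, Pi.star_apply,
        smul_eq_mul] at h ⊢
      rw [h]
      refine Finset.sum_congr rfl fun k _ => ?_
      by_cases hk : p k = 0
      · simp [hk]
      · simp [hk]
  · rintro ⟨m, p, ψ, hp, hsum, hmc, hrho⟩
    have hns : ∀ k i, Complex.normSq (ψ k i) = (n:ℝ)⁻¹ := by
      intro k i
      rw [← Complex.sq_norm, hmc k i, div_pow, one_pow, Real.sq_sqrt hnR.le, one_div]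
    refine ⟨m, p, fun k a => if a.1 = a.2 then ψ k a.1 else 0, hp, hsum, ?_, ?_⟩
    · intro k
      unfold MaxEntangled
      ext i j
      simp only [coeffMatrix, Matrix.mul_apply, Matrix.conjTranspose_apply, Matrix.of_apply,
        Matrix.smul_apply, Matrix.one_apply, smul_eq_mul]
      by_cases hij : i = j
      · subst hij
        rw [Finset.sum_eq_single i (fun l _ hl => by simp [Ne.symm hl]) (by simp)]
        simp only [if_pos rfl, Complex.star_def, Complex.mul_conj, hns k i, if_true, mul_one]
        push_cast
        ring
      · rw [if_neg hij, mul_zero]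
        refine Finset.sum_eq_zero fun l _ => ?_
        by_cases hl : i = l
        · subst hl
          have : ¬ j = i := fun hc => hij hc.symm
          simp [this]
        · simp [hl]
    · ext a b
      simp only [schmidtCorrelated, Matrix.of_apply, hrho, Matrix.sum_apply,
        Matrix.smul_apply, Matrix.vecMulVec_apply, Pi.star_apply, smul_eq_mul]
      by_cases ha : a.1 = a.2 <;> by_cases hb : b.1 = b.2 <;> simp [ha, hb]
end

section
/- If the Schmidt correlated state ρ_mc = Σ_{i,j} ρ_ij |ii⟩⟨jj| on ℂ^n ⊗ ℂ^n associated to a density matrix ρ = (ρ_ij) is assisted maximally entangled (AME), then ρ_ii = 1/n for every index i. -/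
open Matrix
open scoped ComplexOrder

theorem schmidtCorrelated_ame_diagonal {n : ℕ} (ρ : Matrix (Fin n) (Fin n) ℂ)
    (hpsd : ρ.PosSemidef) (htr : ρ.trace = 1)
    (hame : IsAME (schmidtCorrelated ρ)) :
    ∀ i, ρ i i = (1 : ℂ) / n := by
  intro i
  obtain ⟨m, p, Ψ, hp, hsum, hme, heq⟩ := hame
  have key : ∀ k, ∑ j, Ψ k (i, j) * star (Ψ k (i, j)) = (n : ℂ)⁻¹ := by
    intro k
    have h := congrFun (congrFun (hme k) i) i
    simpa [Matrix.mul_apply, coeffMatrix, Matrix.conjTranspose_apply,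
      Matrix.one_apply, Matrix.smul_apply] using h
  have h1 : ∑ j, schmidtCorrelated ρ (i, j) (i, j) = ρ i i := by
    simp only [schmidtCorrelated, Matrix.of_apply]
    rw [Finset.sum_eq_single i]
    · simp
    · intro b _ hb; simp [Ne.symm hb]
    · simp
  have h2 : ∑ j, schmidtCorrelated ρ (i, j) (i, j) = (n : ℂ)⁻¹ := by
    rw [heq]
    have : ∀ j : Fin n,
        (∑ k, (p k : ℂ) • Matrix.vecMulVec (Ψ k) (star (Ψ k))) (i, j) (i, j)
          = ∑ k, (p k : ℂ) * (Ψ k (i, j) * star (Ψ k (i, j))) := by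
      intro j
      simp [Matrix.sum_apply, Matrix.vecMulVec_apply]
    simp only [this]
    rw [Finset.sum_comm]
    have : ∀ k : Fin m, ∑ j, (p k : ℂ) * (Ψ k (i, j) * star (Ψ k (i, j)))
        = (p k : ℂ) * (n : ℂ)⁻¹ := by
      intro k
      rw [← Finset.mul_sum, key k]
    simp only [this]
    rw [← Finset.sum_mul]
    have : (∑ k, (p k : ℂ)) = 1 := by
      rw [← Complex.ofReal_sum, hsum, Complex.ofReal_one]
    rw [this, one_mul]
  rw [← h1, h2, one_div]
end

section
/- For every f ∈ 𝔉 that is not identically zero on Ω_n and every full rank density matrix ρ on ℂ^n, the coherence of assistance is strictly larger than the coherence of convex roof: C_c(ρ) < C_a(ρ). -/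
open Matrix
open scoped ComplexOrder

/-- The set of values `Σ_k p_k F(ψ_k)` over all pure state decompositions
`ρ = Σ_k p_k ψ_k ψ_k†` of `ρ` (weights `p_k ≥ 0` summing to `1`, unit vectors `ψ_k`).
Its supremum is the least concave majorant (assistance) extension of `F`, and
its infimum is the convex roof extension of `F`. -/
def pureDecompVals {ι : Type*} [Fintype ι] (F : (ι → ℂ) → ℝ)
    (ρ : Matrix ι ι ℂ) : Set ℝ :=
  { x | ∃ (m : ℕ) (p : Fin m → ℝ) (ψ : Fin m → ι → ℂ),
      (∀ k, 0 ≤ p k) ∧ (∑ k, p k = 1) ∧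
      (∀ k, ∑ i, ‖ψ k i‖ ^ 2 = 1) ∧
      ρ = ∑ k, (p k : ℂ) • Matrix.vecMulVec (ψ k) (star (ψ k)) ∧
      x = ∑ k, p k * F (ψ k) }

noncomputable section CoAaux
namespace CoAaux
variable {n : ℕ} [NeZero n]

/-- squared l2 norm -/
def qs (z : Fin n → ℂ) : ℝ := ∑ i, ‖z i‖ ^ 2

lemma qs_nonneg (z : Fin n → ℂ) : 0 ≤ qs z :=
  Finset.sum_nonneg fun i _ => sq_nonneg _

lemma qs_eq_zero_iff {z : Fin n → ℂ} : qs z = 0 ↔ z = 0 := by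
  constructor
  · intro h
    funext i
    have := (Finset.sum_eq_zero_iff_of_nonneg (fun i _ => sq_nonneg (‖z i‖))).mp h i
      (Finset.mem_univ i)
    simpa using this
  · intro h; simp [qs, h]

/-- normalization -/
def nv (z : Fin n → ℂ) : Fin n → ℂ :=
  if z = 0 then Pi.single 0 1 else ((Real.sqrt (qs z) : ℝ) : ℂ)⁻¹ • z

lemma qs_single_one : qs (Pi.single (0 : Fin n) (1:ℂ)) = 1 := by
  have : ∀ i : Fin n, ‖(Pi.single (0 : Fin n) (1:ℂ) : Fin n → ℂ) i‖ ^ 2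
      = if i = 0 then (1:ℝ) else 0 := by
    intro i
    by_cases h : i = 0 <;> simp [Pi.single_apply, h]
  simp only [qs, this, Finset.sum_ite_eq' Finset.univ (0 : Fin n) (fun _ => (1:ℝ)),
    Finset.mem_univ, if_pos]

lemma abs_nv_sq (z : Fin n → ℂ) (hz : z ≠ 0) (i : Fin n) :
    ‖nv z i‖ ^ 2 = ‖z i‖ ^ 2 / qs z := by
  have h0 : 0 < qs z := lt_of_le_of_ne (qs_nonneg z) (fun h => hz (qs_eq_zero_iff.mp h.symm))
  simp only [nv, if_neg hz, Pi.smul_apply, smul_eq_mul, norm_mul, mul_pow, norm_inv,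
    Complex.norm_real, Real.norm_eq_abs, abs_of_nonneg (Real.sqrt_nonneg (qs z))]
  rw [inv_pow, Real.sq_sqrt h0.le]
  ring

lemma qs_nv (z : Fin n → ℂ) : qs (nv z) = 1 := by
  by_cases hz : z = 0
  · rw [nv, if_pos hz]; exact qs_single_one
  · have h0 : 0 < qs z := lt_of_le_of_ne (qs_nonneg z) (fun h => hz (qs_eq_zero_iff.mp h.symm))
    unfold qs
    rw [Finset.sum_congr rfl fun i _ => abs_nv_sq z hz i, ← Finset.sum_div]
    exact div_self h0.ne'

/-- rank-one operator -/
def Aop (z : Fin n → ℂ) : Matrix (Fin n) (Fin n) ℂ := Matrix.vecMulVec z (star z)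

lemma Aop_apply (z : Fin n → ℂ) (a b : Fin n) :
    Aop z a b = z a * (starRingEnd ℂ) (z b) := rfl

lemma Aop_smul (c : ℂ) (z : Fin n → ℂ) :
    Aop (c • z) = (c * (starRingEnd ℂ) c) • Aop z := by
  ext a b
  simp [Aop_apply, Matrix.smul_apply, Pi.smul_apply, smul_eq_mul, _root_.map_mul]
  ring

lemma smul_Aop_nv (z : Fin n → ℂ) : ((qs z : ℝ) : ℂ) • Aop (nv z) = Aop z := by
  by_cases hz : z = 0
  · simp [hz, qs_eq_zero_iff.mpr rfl, Aop]
  · have h0 : 0 < qs z := lt_of_le_of_ne (qs_nonneg z) (fun h => hz (qs_eq_zero_iff.mp h.symm))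
    rw [nv, if_neg hz, Aop_smul]
    rw [smul_smul]
    have : (((qs z : ℝ) : ℂ)) * ((((Real.sqrt (qs z) : ℝ) : ℂ))⁻¹ * (starRingEnd ℂ) (((Real.sqrt (qs z) : ℝ) : ℂ))⁻¹) = 1 := by
      rw [← Complex.ofReal_inv, Complex.conj_ofReal, ← Complex.ofReal_mul, ← Complex.ofReal_mul]
      rw [← Real.sqrt_inv]
      rw [Real.mul_self_sqrt (by positivity)]
      rw [← Complex.ofReal_one]
      congr 1
      field_simp
    rw [this, one_smul]

lemma trace_Aop (z : Fin n → ℂ) : (Aop z).trace = ((qs z : ℝ) : ℂ) := by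
  simp only [Matrix.trace, Matrix.diag, Aop_apply, Complex.mul_conj, qs, Complex.sq_norm]
  norm_cast

lemma Aop_herm (z : Fin n → ℂ) : (Aop z).IsHermitian := by
  ext a b
  simp [Matrix.conjTranspose_apply, Aop_apply]
  ring

lemma Aop_par (z w : Fin n → ℂ) :
    Aop (z + w) + Aop (z - w) = (2:ℂ) • (Aop z + Aop w) := by
  ext a b
  simp [Aop_apply, Matrix.add_apply, Matrix.smul_apply, Pi.add_apply, Pi.sub_apply, map_add,
    map_sub, smul_eq_mul]
  ring

lemma spec_decomp {R : Matrix (Fin n) (Fin n) ℂ} (hR : R.PosSemidef) :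
    ∃ (μ : Fin n → ℝ) (w : Fin n → Fin n → ℂ),
      (∀ i, 0 ≤ μ i) ∧ (∀ i, qs (w i) = 1) ∧
      R = ∑ i, ((μ i : ℝ) : ℂ) • Aop (w i) ∧ (((∑ i, μ i : ℝ)) : ℂ) = R.trace := by
  classical
  have hH : R.IsHermitian := hR.1
  set U : Matrix (Fin n) (Fin n) ℂ := (hH.eigenvectorUnitary : Matrix (Fin n) (Fin n) ℂ) with hU
  have hUmem := hH.eigenvectorUnitary.2
  have hUU : U * star U = 1 := (Matrix.mem_unitaryGroup_iff).mp hUmem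
  have hUU' : star U * U = 1 := (Matrix.mem_unitaryGroup_iff').mp hUmem
  refine ⟨hH.eigenvalues, fun i a => U a i, hR.eigenvalues_nonneg, ?_, ?_, ?_⟩
  · intro i
    have h1 : (star U * U) i i = 1 := by rw [hUU']; simp
    rw [Matrix.mul_apply] at h1
    have : ∀ a, (star U) i a * U a i = ((‖U a i‖ ^ 2 : ℝ) : ℂ) := by
      intro a
      rw [Matrix.star_apply, Complex.star_def, mul_comm, Complex.mul_conj, Complex.sq_norm]
    rw [Finset.sum_congr rfl fun a _ => this a, ← Complex.ofReal_sum] at h1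
    exact_mod_cast h1
  · have hst := hH.spectral_theorem
    simp only [Unitary.conjStarAlgAut_apply, Unitary.coe_star] at hst
    rw [← hU] at hst
    conv_lhs => rw [hst]
    ext a b
    rw [Matrix.mul_apply]
    simp only [Matrix.sum_apply, Matrix.smul_apply]
    apply Finset.sum_congr rfl
    intro i _
    rw [Matrix.mul_diagonal]
    rw [Matrix.star_apply, Complex.star_def]
    show U a i * RCLike.ofReal (hH.eigenvalues i) * (starRingEnd ℂ) (U b i)
      = _ • Aop (fun a => U a i) a b
    simp only [Aop, Matrix.vecMulVec_apply, Pi.star_apply, Complex.star_def, smul_eq_mul,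
      RCLike.ofReal_alg, Complex.real_smul]
    push_cast
    ring
  · have hst := hH.spectral_theorem
    simp only [Unitary.conjStarAlgAut_apply, Unitary.coe_star] at hst
    rw [← hU] at hst
    conv_rhs => rw [hst]
    rw [mul_assoc, Matrix.trace_mul_comm, mul_assoc, hUU', mul_one, Matrix.trace_diagonal]
    push_cast
    rfl

lemma dot_self_eq_qs (x : Fin n → ℂ) : star x ⬝ᵥ x = ((qs x : ℝ) : ℂ) := by
  unfold dotProduct qs
  rw [Complex.ofReal_sum]
  apply Finset.sum_congr rfl
  intro a _
  rw [Pi.star_apply, Complex.star_def, mul_comm, Complex.mul_conj, Complex.sq_norm]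

lemma quad_Aop (z x : Fin n → ℂ) :
    star x ⬝ᵥ (Aop z *ᵥ x) = ((‖star z ⬝ᵥ x‖ ^ 2 : ℝ) : ℂ) := by
  have hmv : ∀ a, (Aop z *ᵥ x) a = z a * (star z ⬝ᵥ x) := by
    intro a
    unfold Matrix.mulVec dotProduct Aop
    simp only [Matrix.vecMulVec_apply, Finset.mul_sum]
    exact Finset.sum_congr rfl fun b _ => by ring
  unfold dotProduct
  simp only [hmv]
  have : ∑ a, star x a * (z a * (star z ⬝ᵥ x)) = (∑ a, star x a * z a) * (star z ⬝ᵥ x) := by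
    rw [Finset.sum_mul]
    exact Finset.sum_congr rfl fun a _ => by ring
  rw [this]
  have h2 : (∑ a, star x a * z a) = (starRingEnd ℂ) (star z ⬝ᵥ x) := by
    unfold dotProduct
    rw [map_sum]
    apply Finset.sum_congr rfl
    intro a _
    simp [Pi.star_apply, Complex.star_def, mul_comm]
  rw [h2, mul_comm, Complex.mul_conj, Complex.sq_norm]
  rfl

lemma cs_bound (z x : Fin n → ℂ) : ‖star z ⬝ᵥ x‖ ^ 2 ≤ qs z * qs x := by
  have h1 : ‖star z ⬝ᵥ x‖ ≤ ∑ a, ‖z a‖ * ‖x a‖ := by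
    refine le_trans (norm_sum_le _ _) (le_of_eq ?_)
    apply Finset.sum_congr rfl
    intro a _
    rw [Pi.star_apply, norm_mul, Complex.star_def, Complex.norm_conj]
  have h2 : (∑ a, ‖z a‖ * ‖x a‖) ^ 2 ≤ qs z * qs x :=
    Finset.sum_mul_sq_le_sq_mul_sq Finset.univ _ _
  have h0 : 0 ≤ ‖star z ⬝ᵥ x‖ := norm_nonneg _
  nlinarith [Finset.sum_nonneg (fun a (_ : a ∈ Finset.univ) =>
    mul_nonneg (norm_nonneg (z a)) (norm_nonneg (x a)))]

lemma exists_smul_one_le {ρ : Matrix (Fin n) (Fin n) ℂ} (hpsd : ρ.PosSemidef)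
    (hrank : ρ.det ≠ 0) :
    ∃ c : ℝ, 0 < c ∧ (ρ - (c : ℂ) • 1).PosSemidef := by
  classical
  have hH : ρ.IsHermitian := hpsd.1
  set U : Matrix (Fin n) (Fin n) ℂ := (hH.eigenvectorUnitary : Matrix (Fin n) (Fin n) ℂ) with hUdef
  have hUU : U * star U = 1 := (Matrix.mem_unitaryGroup_iff).mp hH.eigenvectorUnitary.2
  have hpos : ∀ i, 0 < hH.eigenvalues i := by
    intro i
    rcases lt_or_eq_of_le (hpsd.eigenvalues_nonneg i) with h | h
    · exact h
    · exfalso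
      apply hrank
      rw [hH.det_eq_prod_eigenvalues]
      apply Finset.prod_eq_zero (Finset.mem_univ i)
      rw [← h]
      norm_cast
  have hne : (Finset.univ : Finset (Fin n)).Nonempty := Finset.univ_nonempty
  set c : ℝ := Finset.univ.inf' hne hH.eigenvalues with hc
  refine ⟨c, ?_, ?_⟩
  · rw [hc, Finset.lt_inf'_iff]
    exact fun i _ => hpos i
  · have key : ρ - (c : ℂ) • 1 = U * diagonal (fun i => ((hH.eigenvalues i - c : ℝ) : ℂ)) * star U := by
      have h1 : ((c : ℂ) • (1 : Matrix (Fin n) (Fin n) ℂ)) = U * ((c : ℂ) • 1) * star U := by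
        rw [Matrix.mul_smul, Matrix.smul_mul, mul_one, hUU]
      conv_lhs => rw [hH.spectral_theorem, Unitary.conjStarAlgAut_apply, ← hUdef, h1]
      rw [← Matrix.sub_mul, ← Matrix.mul_sub]
      congr 1
      congr 1
      rw [← Matrix.diagonal_one, ← Matrix.diagonal_smul, Matrix.diagonal_sub]
      congr 1
      funext i
      simp only [Pi.sub_apply, Function.comp_apply, Pi.smul_apply, smul_eq_mul, mul_one,
        Complex.ofReal_sub, Complex.coe_algebraMap]
    rw [key, Matrix.star_eq_conjTranspose]
    apply Matrix.PosSemidef.mul_mul_conjTranspose_same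
    rw [Matrix.posSemidef_diagonal_iff]
    intro i
    have : c ≤ hH.eigenvalues i := Finset.inf'_le _ (Finset.mem_univ i)
    rw [← Complex.ofReal_zero]
    exact_mod_cast sub_nonneg.mpr this

lemma psd_sub_pair {ρ : Matrix (Fin n) (Fin n) ℂ} {c : ℝ}
    (hcpsd : (ρ - (c:ℂ) • 1).PosSemidef) (z w : Fin n → ℂ) (hle : qs z + qs w ≤ c) :
    (ρ - Aop z - Aop w).PosSemidef := by
  have key : ρ - Aop z - Aop w
      = (ρ - (c:ℂ) • 1) + ((c:ℂ) • 1 - Aop z - Aop w) := by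
    abel
  rw [key]
  apply hcpsd.add
  rw [Matrix.posSemidef_iff_dotProduct_mulVec]
  constructor
  · have h1 : ((c:ℂ) • (1 : Matrix (Fin n) (Fin n) ℂ)).IsHermitian := by
      show ((c:ℂ) • (1 : Matrix (Fin n) (Fin n) ℂ))ᴴ = _
      rw [Matrix.conjTranspose_smul, Matrix.conjTranspose_one]
      congr 1
      exact Complex.conj_ofReal c
    exact (h1.sub (Aop_herm z)).sub (Aop_herm w)
  · intro x
    rw [Matrix.sub_mulVec, Matrix.sub_mulVec, dotProduct_sub, dotProduct_sub,
      Matrix.smul_mulVec, Matrix.one_mulVec, dotProduct_smul,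
      dot_self_eq_qs, quad_Aop, quad_Aop]
    have : ((c:ℂ) • ((qs x : ℝ) : ℂ)) - ((‖star z ⬝ᵥ x‖ ^ 2 : ℝ) : ℂ)
        - ((‖star w ⬝ᵥ x‖ ^ 2 : ℝ) : ℂ)
        = (((c * qs x - ‖star z ⬝ᵥ x‖ ^ 2 - ‖star w ⬝ᵥ x‖ ^ 2 : ℝ)) : ℂ) := by
      push_cast
      simp [smul_eq_mul]
    rw [this]
    rw [Complex.zero_le_real]
    nlinarith [cs_bound z x, cs_bound w x, qs_nonneg x, qs_nonneg z, qs_nonneg w]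

/-- the (unnormalized) value functional -/
def Gf (f : (Fin n → ℝ) → ℝ) (z : Fin n → ℂ) : ℝ :=
  qs z * f (fun i => ‖nv z i‖ ^ 2)

lemma Gf_zero (f : (Fin n → ℝ) → ℝ) : Gf f 0 = 0 := by
  simp [Gf, qs_eq_zero_iff.mpr rfl]

lemma decomp_mem (f : (Fin n → ℝ) → ℝ) {ρ : Matrix (Fin n) (Fin n) ℂ} (htr : ρ.trace = 1)
    {z w : Fin n → ℂ} (h : (ρ - Aop z - Aop w).PosSemidef) :
    ∃ T : ℝ, ∀ z' w', Aop z' + Aop w' = Aop z + Aop w →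
      Gf f z' + Gf f w' + T ∈ pureDecompVals (fun ψ => f fun i => ‖ψ i‖ ^ 2) ρ := by
  obtain ⟨μ, W, hμ, hW, hResum, hRtr⟩ := spec_decomp h
  refine ⟨∑ i, μ i * f (fun a => ‖W i a‖ ^ 2), ?_⟩
  intro z' w' heq
  have htrR : (((∑ i, μ i : ℝ)) : ℂ) = 1 - ((qs z : ℝ) : ℂ) - ((qs w : ℝ) : ℂ) := by
    rw [hRtr, Matrix.trace_sub, Matrix.trace_sub, htr, trace_Aop, trace_Aop]
  have hqq : qs z' + qs w' = qs z + qs w := by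
    have := congrArg Matrix.trace heq
    rw [Matrix.trace_add, Matrix.trace_add, trace_Aop, trace_Aop, trace_Aop, trace_Aop] at this
    exact_mod_cast this
  refine ⟨n + 2, Fin.cons (qs z') (Fin.cons (qs w') μ),
    Fin.cons (nv z') (Fin.cons (nv w') W), ?_, ?_, ?_, ?_, ?_⟩
  · intro k
    refine Fin.cases ?_ (fun j => ?_) k
    · exact qs_nonneg z'
    · refine Fin.cases ?_ (fun j' => ?_) j
      · exact qs_nonneg w'
      · exact hμ j'
  · rw [Fin.sum_univ_succ, Fin.sum_univ_succ]
    simp only [Fin.cons_zero, Fin.cons_succ]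
    have hμsum : ∑ i, μ i = 1 - qs z - qs w := by exact_mod_cast htrR
    rw [hμsum]
    linarith [hqq]
  · intro k
    refine Fin.cases ?_ (fun j => ?_) k
    · exact qs_nv z'
    · refine Fin.cases ?_ (fun j' => ?_) j
      · exact qs_nv w'
      · exact hW j'
  · rw [Fin.sum_univ_succ, Fin.sum_univ_succ]
    simp only [Fin.cons_zero, Fin.cons_succ]
    show ρ = ((qs z' : ℝ) : ℂ) • Aop (nv z') + (((qs w' : ℝ) : ℂ) • Aop (nv w') + ∑ i, ((μ i : ℝ) : ℂ) • Aop (W i))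
    rw [smul_Aop_nv, smul_Aop_nv, ← hResum]
    rw [← add_assoc, heq]
    abel
  · rw [Fin.sum_univ_succ, Fin.sum_univ_succ]
    simp only [Fin.cons_zero, Fin.cons_succ]
    show Gf f z' + Gf f w' + _
      = qs z' * f (fun i => ‖nv z' i‖ ^ 2)
        + (qs w' * f (fun i => ‖nv w' i‖ ^ 2)
          + ∑ i, μ i * f (fun a => ‖W i a‖ ^ 2))
    rw [Gf, Gf]
    ring

lemma Aop_zero : Aop (0 : Fin n → ℂ) = 0 := by
  ext a b
  simp [Aop_apply]

lemma qs_single (i : Fin n) (c : ℂ) : qs (Pi.single i c) = ‖c‖ ^ 2 := by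
  have : ∀ j : Fin n, ‖(Pi.single i c : Fin n → ℂ) j‖ ^ 2
      = if j = i then ‖c‖ ^ 2 else 0 := by
    intro j
    by_cases h : j = i <;> simp [Pi.single_apply, h]
  simp only [qs, this, Finset.sum_ite_eq' Finset.univ i (fun _ => ‖c‖ ^ 2),
    Finset.mem_univ, if_pos]

lemma Gf_single (f : (Fin n → ℝ) → ℝ) (hf0 : ∀ i : Fin n, f (Pi.single i 1) = 0)
    (i : Fin n) (c : ℂ) : Gf f (Pi.single i c) = 0 := by
  by_cases hc : c = 0
  · rw [hc]
    rw [show (Pi.single i (0:ℂ) : Fin n → ℂ) = 0 from by funext j; simp [Pi.single_apply]]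
    exact Gf_zero f
  · have hz : (Pi.single i c : Fin n → ℂ) ≠ 0 := by
      intro h
      exact hc (by simpa using congrFun h i)
    have hq : qs (Pi.single i c : Fin n → ℂ) = ‖c‖ ^ 2 := qs_single i c
    have harg : (fun j => ‖nv (Pi.single i c) j‖ ^ 2) = Pi.single i 1 := by
      funext j
      rw [abs_nv_sq _ hz j, hq]
      by_cases h : j = i
      · subst h
        simp only [Pi.single_eq_same]
        exact div_self (pow_ne_zero 2 (norm_ne_zero_iff.mpr hc))
      · simp [Pi.single_apply, h]
    rw [Gf, harg, hf0 i, mul_zero]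

lemma qs_real_smul (t : ℝ) (z : Fin n → ℂ) : qs ((t : ℂ) • z) = t ^ 2 * qs z := by
  unfold qs
  rw [Finset.mul_sum]
  apply Finset.sum_congr rfl
  intro i _
  simp only [Pi.smul_apply, smul_eq_mul, norm_mul, Complex.norm_real, Real.norm_eq_abs, mul_pow, sq_abs]

lemma nv_real_smul (t : ℝ) (ht : 0 < t) (z : Fin n → ℂ) : nv ((t : ℂ) • z) = nv z := by
  by_cases hz : z = 0
  · rw [hz, smul_zero]
  · have hz' : (t : ℂ) • z ≠ 0 := smul_ne_zero (by exact_mod_cast ht.ne') hz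
    have h0 : 0 < qs z := lt_of_le_of_ne (qs_nonneg z) (fun h => hz (qs_eq_zero_iff.mp h.symm))
    rw [nv, if_neg hz', nv, if_neg hz]
    rw [qs_real_smul]
    rw [Real.sqrt_mul (sq_nonneg t), Real.sqrt_sq ht.le]
    rw [smul_smul]
    congr 1
    have hsq : Real.sqrt (qs z) ≠ 0 := (Real.sqrt_pos.mpr h0).ne'
    have ht' : (t:ℂ) ≠ 0 := by exact_mod_cast ht.ne'
    have hsq' : ((Real.sqrt (qs z) : ℝ) : ℂ) ≠ 0 := by exact_mod_cast hsq
    push_cast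
    field_simp

lemma Gf_real_smul (f : (Fin n → ℝ) → ℝ) (t : ℝ) (ht : 0 < t) (z : Fin n → ℂ) :
    Gf f ((t : ℂ) • z) = t ^ 2 * Gf f z := by
  rw [Gf, Gf, qs_real_smul, nv_real_smul t ht, mul_assoc]

end CoAaux
end CoAaux

open CoAaux in
theorem coherence_of_assistance_gt_convex_roof_of_full_rank
    {n : ℕ} [NeZero n] (f : (Fin n → ℝ) → ℝ)
    (hconc : ConcaveOn ℝ (stdSimplex ℝ (Fin n)) f)
    (hsym : ∀ σ : Equiv.Perm (Fin n), ∀ x ∈ stdSimplex ℝ (Fin n), f (x ∘ σ) = f x)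
    (hzero : f (Pi.single 0 1) = 0)
    (hne : ∃ x ∈ stdSimplex ℝ (Fin n), f x ≠ 0)
    (ρ : Matrix (Fin n) (Fin n) ℂ)
    (hpsd : ρ.PosSemidef) (htr : ρ.trace = 1) (hrank : ρ.det ≠ 0) :
    sInf (pureDecompVals (fun ψ => f fun i => ‖ψ i‖ ^ 2) ρ) <
      sSup (pureDecompVals (fun ψ => f fun i => ‖ψ i‖ ^ 2) ρ) := by
  classical
  set S : Set ℝ := pureDecompVals (fun ψ => f fun i => ‖ψ i‖ ^ 2) ρ with hSdef
  -- f vanishes at all vertices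
  have hsinglemem : ∀ i : Fin n, (Pi.single i 1 : Fin n → ℝ) ∈ stdSimplex ℝ (Fin n) := by
    intro i
    constructor
    · intro j
      by_cases h : j = i <;> simp [Pi.single_apply, h]
    · simp [Finset.sum_pi_single']
  have hf0 : ∀ i : Fin n, f (Pi.single i 1) = 0 := by
    intro i
    have hcomp : (Pi.single i (1:ℝ)) ∘ (Equiv.swap 0 i) = Pi.single 0 1 := by
      funext j
      simp only [Function.comp_apply]
      by_cases h0 : j = 0
      · subst h0
        simp [Equiv.swap_apply_left, Pi.single_apply]
      · by_cases hi : j = i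
        · subst hi
          by_cases hj0 : j = 0
          · exact absurd hj0 h0
          · simp [Equiv.swap_apply_right, Pi.single_apply, h0]
        · rw [Equiv.swap_apply_of_ne_of_ne h0 hi]
          simp [Pi.single_apply, h0, hi]
    have hperm := hsym (Equiv.swap 0 i) _ (hsinglemem i)
    rw [hcomp, hzero] at hperm
    exact hperm.symm
  -- f is nonnegative on the simplex
  have hfnn : ∀ x ∈ stdSimplex ℝ (Fin n), 0 ≤ f x := by
    intro x hx
    have hje := hconc.le_map_sum (t := Finset.univ) (w := x)
      (p := fun i => (Pi.single i 1 : Fin n → ℝ))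
      (fun i _ => hx.1 i) hx.2 (fun i _ => hsinglemem i)
    have harg : ∑ i, x i • (Pi.single i 1 : Fin n → ℝ) = x := by
      funext j
      rw [Finset.sum_apply]
      have : ∀ i, (x i • (Pi.single i 1 : Fin n → ℝ)) j = if i = j then x j else 0 := by
        intro i
        by_cases h : i = j <;> simp [Pi.single_apply, h]
      simp only [this, Finset.sum_ite_eq' Finset.univ j (fun _ => x j), Finset.mem_univ, if_pos]
    have hlhs : ∑ i, x i • f (Pi.single i 1) = 0 := by
      rw [Finset.sum_congr rfl (fun i _ => by rw [hf0 i, smul_zero])]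
      exact Finset.sum_const_zero
    rw [harg, hlhs] at hje
    exact hje
  have hGnn : ∀ z : Fin n → ℂ, 0 ≤ Gf f z := by
    intro z
    apply mul_nonneg (qs_nonneg z)
    exact hfnn _ ⟨fun i => sq_nonneg _, qs_nv z⟩
  -- bounds for S
  have hlb : ∀ x ∈ S, (0:ℝ) ≤ x := by
    rintro x ⟨m, p, ψ, hp, hsum, hunit, hmat, hval⟩
    rw [hval]
    apply Finset.sum_nonneg
    intro k _
    exact mul_nonneg (hp k) (hfnn _ ⟨fun i => sq_nonneg _, hunit k⟩)
  have hub : ∀ x ∈ S, x ≤ f (fun i => (ρ i i).re) := by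
    rintro x ⟨m, p, ψ, hp, hsum, hunit, hmat, hval⟩
    have hje := hconc.le_map_sum (t := Finset.univ) (w := p)
      (p := fun k => (fun i => ‖ψ k i‖ ^ 2))
      (fun k _ => hp k) hsum (fun k _ => ⟨fun i => sq_nonneg _, hunit k⟩)
    have harg : (∑ k, p k • fun i => ‖ψ k i‖ ^ 2) = fun i => (ρ i i).re := by
      funext i
      have hmm := congrArg (fun M : Matrix (Fin n) (Fin n) ℂ => (M i i).re) hmat
      simp only [Matrix.sum_apply, Matrix.smul_apply, Matrix.vecMulVec_apply, Pi.star_apply,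
        smul_eq_mul] at hmm
      have hterm : ∀ k, (p k : ℂ) * (ψ k i * star (ψ k i))
          = ((p k * ‖ψ k i‖ ^ 2 : ℝ) : ℂ) := by
        intro k
        rw [Complex.star_def, Complex.mul_conj, Complex.sq_norm]
        push_cast
        ring
      rw [Finset.sum_congr rfl (fun k _ => hterm k), ← Complex.ofReal_sum] at hmm
      rw [Finset.sum_apply]
      simp only [Pi.smul_apply, smul_eq_mul]
      rw [hmm, Complex.ofReal_re]
    rw [harg] at hje
    rw [hval]
    exact hje
  have hbddA : BddAbove S := ⟨_, fun x hx => hub x hx⟩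
  have hbddB : BddBelow S := ⟨0, fun x hx => hlb x hx⟩
  by_contra hcon
  push_neg at hcon
  have allEq : ∀ a ∈ S, ∀ b ∈ S, a = b := by
    intro a ha b hb
    have h1 : a ≤ b := le_trans (le_csSup hbddA ha) (le_trans hcon (csInf_le hbddB hb))
    have h2 : b ≤ a := le_trans (le_csSup hbddA hb) (le_trans hcon (csInf_le hbddB ha))
    exact le_antisymm h1 h2
  obtain ⟨c, hc0, hcpsd⟩ := exists_smul_one_le hpsd hrank
  -- the parallelogram identity for Gf
  have hkey : ∀ z w : Fin n → ℂ, qs z + qs w ≤ c →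
      Gf f z + Gf f w
        = Gf f ((((Real.sqrt 2)⁻¹ : ℝ) : ℂ) • (z + w))
          + Gf f ((((Real.sqrt 2)⁻¹ : ℝ) : ℂ) • (z - w)) := by
    intro z w hle
    have hpsd' := psd_sub_pair hcpsd z w hle
    obtain ⟨T, hT⟩ := decomp_mem f htr hpsd'
    have h1 : Gf f z + Gf f w + T ∈ S := hT z w rfl
    set u : Fin n → ℂ := (((Real.sqrt 2)⁻¹ : ℝ) : ℂ) • (z + w) with hu
    set v : Fin n → ℂ := (((Real.sqrt 2)⁻¹ : ℝ) : ℂ) • (z - w) with hv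
    have hscal : ((((Real.sqrt 2)⁻¹ : ℝ) : ℂ)) * (starRingEnd ℂ) ((((Real.sqrt 2)⁻¹ : ℝ) : ℂ))
        = (2⁻¹ : ℂ) := by
      rw [Complex.conj_ofReal, ← Complex.ofReal_mul, ← mul_inv,
        Real.mul_self_sqrt (by norm_num : (0:ℝ) ≤ 2)]
      norm_num
    have heq : Aop u + Aop v = Aop z + Aop w := by
      rw [hu, hv, Aop_smul, Aop_smul, hscal, ← smul_add, Aop_par, smul_smul]
      norm_num
    have h2 : Gf f u + Gf f v + T ∈ S := hT u v heq
    have := allEq _ h1 _ h2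
    linarith
  -- Gf vanishes on all small vectors
  have hvanish : ∀ k : ℕ, ∀ cv : Fin n → ℂ, (∀ i : Fin n, k ≤ (i : ℕ) → cv i = 0) →
      qs cv ≤ c → Gf f cv = 0 := by
    intro k
    induction k with
    | zero =>
      intro cv hsupp _
      have : cv = 0 := funext fun i => hsupp i (Nat.zero_le _)
      rw [this, Gf_zero]
    | succ k ih =>
      intro cv hsupp hq
      by_cases hk : k < n
      · set kk : Fin n := ⟨k, hk⟩ with hkk
        set z : Fin n → ℂ := Function.update cv kk 0 with hz
        set w : Fin n → ℂ := Pi.single kk (cv kk) with hw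
        have hzw : z + w = cv := by
          funext j
          by_cases hj : j = kk
          · subst hj
            simp [hz, hw, Function.update_apply, Pi.single_apply]
          · simp [hz, hw, Function.update_apply, Pi.single_apply, hj]
        have hqzw : qs z + qs w = qs cv := by
          unfold qs
          rw [← Finset.sum_add_distrib]
          apply Finset.sum_congr rfl
          intro j _
          by_cases hj : j = kk
          · subst hj
            simp [hz, hw, Function.update_apply, Pi.single_apply]
          · simp [hz, hw, Function.update_apply, Pi.single_apply, hj]
        have hle : qs z + qs w ≤ c := by rw [hqzw]; exact hq
        have heq := hkey z w hle
        have hz0 : Gf f z = 0 := by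
          apply ih z
          · intro i hi
            by_cases hik : i = kk
            · subst hik; simp [hz]
            · rw [hz, Function.update_apply, if_neg hik]
              apply hsupp
              have : (i : ℕ) ≠ k := fun hh => hik (Fin.ext hh)
              omega
          · have := qs_nonneg w
            linarith
        have hw0 : Gf f w = 0 := Gf_single f hf0 kk (cv kk)
        rw [hz0, hw0, hzw] at heq
        have hu := hGnn ((((Real.sqrt 2)⁻¹ : ℝ) : ℂ) • cv)
        have hv := hGnn ((((Real.sqrt 2)⁻¹ : ℝ) : ℂ) • (z - w))
        have hu0 : Gf f ((((Real.sqrt 2)⁻¹ : ℝ) : ℂ) • cv) = 0 := by linarith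
        have hsm := Gf_real_smul f ((Real.sqrt 2)⁻¹)
          (by positivity) cv
        rw [hu0] at hsm
        have hpow : ((Real.sqrt 2)⁻¹) ^ 2 = 2⁻¹ := by
          rw [inv_pow, Real.sq_sqrt (by norm_num : (0:ℝ) ≤ 2)]
        rw [hpow] at hsm
        have := hsm.symm
        field_simp at this
        linarith [this]
      · apply ih cv _ hq
        intro i hi
        exact absurd hi (by omega)
  -- conclude f = 0 on the simplex
  obtain ⟨y, hy, hfy⟩ := hne
  apply hfy
  set cv : Fin n → ℂ := fun i => ((Real.sqrt (c * y i) : ℝ) : ℂ) with hcv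
  have hqcv : qs cv = c := by
    unfold qs
    have : ∀ i, ‖cv i‖ ^ 2 = c * y i := by
      intro i
      rw [hcv]
      simp only [Complex.norm_real, Real.norm_eq_abs]
      rw [sq_abs, Real.sq_sqrt (mul_nonneg hc0.le (hy.1 i))]
    rw [Finset.sum_congr rfl (fun i _ => this i), ← Finset.mul_sum, hy.2, mul_one]
  have hcv0 : cv ≠ 0 := by
    intro h
    rw [← qs_eq_zero_iff] at h
    rw [hqcv] at h
    exact hc0.ne' h
  have harg : (fun i => ‖nv cv i‖ ^ 2) = y := by
    funext i
    rw [abs_nv_sq cv hcv0 i, hqcv]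
    have : ‖cv i‖ ^ 2 = c * y i := by
      rw [hcv]
      simp only [Complex.norm_real, Real.norm_eq_abs]
      rw [sq_abs, Real.sq_sqrt (mul_nonneg hc0.le (hy.1 i))]
    rw [this, mul_comm, mul_div_assoc, div_self hc0.ne', mul_one]
  have h0 := hvanish n cv (fun i hi => absurd hi (by omega)) (le_of_eq hqcv)
  rw [Gf, hqcv, harg] at h0
  exact (mul_eq_zero.mp h0).resolve_left hc0.ne'
end

section
/- For every f ∈ 𝔉 on Ω_2 that is not identically zero, the coherence of assistance is not monotone under incoherent operations: C_a of the pure incoherent state |0⟩⟨0| equals 0, while C_a of the maximally mixed qubit state (1/2)·I (which is the image of |0⟩⟨0| under the incoherent operation Λ(ρ) = K_1 ρ K_1† + K_2 ρ K_2† with K_1 = I/√2 and K_2 = X/√2, X the swap of basis vectors) is strictly positive; hence C_a(|0⟩⟨0|) < C_a(Λ(|0⟩⟨0|)). -/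
open Matrix
open scoped ComplexOrder

private lemma coa_h2r : (Real.sqrt 2)⁻¹ * (Real.sqrt 2)⁻¹ = (2:ℝ)⁻¹ := by
  rw [← mul_inv, Real.mul_self_sqrt (by norm_num : (0:ℝ) ≤ 2)]

private lemma coa_h2c : ((Real.sqrt 2 : ℂ))⁻¹ * ((Real.sqrt 2 : ℂ))⁻¹ = (2:ℂ)⁻¹ := by
  rw [← Complex.ofReal_inv, ← Complex.ofReal_mul, coa_h2r]
  norm_num

private lemma coa_habs : ‖((Real.sqrt 2 : ℂ))⁻¹‖ ^ 2 = 1/2 := by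
  rw [norm_inv, Complex.norm_real, Real.norm_of_nonneg (Real.sqrt_nonneg 2), inv_pow, sq,
    Real.mul_self_sqrt (by norm_num : (0:ℝ) ≤ 2)]
  norm_num

private lemma coa_le_center (f : (Fin 2 → ℝ) → ℝ)
    (hconc : ConcaveOn ℝ (stdSimplex ℝ (Fin 2)) f)
    (hsym : ∀ σ : Equiv.Perm (Fin 2), ∀ x ∈ stdSimplex ℝ (Fin 2), f (x ∘ σ) = f x)
    (x : Fin 2 → ℝ) (hx : x ∈ stdSimplex ℝ (Fin 2)) :
    f x ≤ f (fun _ => (1/2:ℝ)) := by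
  have hx' : x ∘ (Equiv.swap 0 1 : Equiv.Perm (Fin 2)) ∈ stdSimplex ℝ (Fin 2) := by
    constructor
    · intro i; exact hx.1 _
    · simp [Fin.sum_univ_two, Equiv.swap_apply_left, Equiv.swap_apply_right]
      rw [add_comm]; exact hx.2 ▸ by simp [Fin.sum_univ_two]
  have h := hconc.2 hx hx' (by norm_num : (0:ℝ) ≤ 1/2) (by norm_num : (0:ℝ) ≤ 1/2) (by norm_num)
  have hmid : (1/2:ℝ) • x + (1/2:ℝ) • (x ∘ (Equiv.swap 0 1 : Equiv.Perm (Fin 2)))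
      = fun _ => (1/2:ℝ) := by
    funext i
    have hsum := hx.2
    rw [Fin.sum_univ_two] at hsum
    fin_cases i <;>
      simp [Function.comp, Equiv.swap_apply_def] <;> linarith
  rw [hmid, hsym (Equiv.swap 0 1) x hx] at h
  simp only [smul_eq_mul] at h
  linarith

private lemma coa_nonneg (f : (Fin 2 → ℝ) → ℝ)
    (hconc : ConcaveOn ℝ (stdSimplex ℝ (Fin 2)) f)
    (hsym : ∀ σ : Equiv.Perm (Fin 2), ∀ x ∈ stdSimplex ℝ (Fin 2), f (x ∘ σ) = f x)
    (hzero : f (Pi.single 0 1) = 0)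
    (x : Fin 2 → ℝ) (hx : x ∈ stdSimplex ℝ (Fin 2)) : 0 ≤ f x := by
  have h0 : (Pi.single 0 1 : Fin 2 → ℝ) ∈ stdSimplex ℝ (Fin 2) := by
    constructor
    · intro i; fin_cases i <;> simp
    · simp [Fin.sum_univ_two]
  have h1 : (Pi.single 1 1 : Fin 2 → ℝ) ∈ stdSimplex ℝ (Fin 2) := by
    constructor
    · intro i; fin_cases i <;> simp
    · simp [Fin.sum_univ_two]
  have hz1 : f (Pi.single 1 1) = 0 := by
    have := hsym (Equiv.swap 0 1) (Pi.single 1 1) h1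
    have he : (Pi.single 1 1 : Fin 2 → ℝ) ∘ (Equiv.swap 0 1 : Equiv.Perm (Fin 2))
        = Pi.single 0 1 := by
      funext i
      fin_cases i <;> simp [Function.comp, Equiv.swap_apply_def]
    rw [he, hzero] at this
    linarith
  have h := hconc.2 h0 h1 (hx.1 0) (hx.1 1) (by rw [← Fin.sum_univ_two]; exact hx.2)
  have hxe : (x 0) • (Pi.single 0 1 : Fin 2 → ℝ) + (x 1) • (Pi.single 1 1 : Fin 2 → ℝ) = x := by
    funext i; fin_cases i <;> simp
  rw [hxe, hzero, hz1] at h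
  simp only [smul_eq_mul, mul_zero, add_zero] at h
  linarith

theorem coherence_of_assistance_not_monotone (f : (Fin 2 → ℝ) → ℝ)
    (hconc : ConcaveOn ℝ (stdSimplex ℝ (Fin 2)) f)
    (hsym : ∀ σ : Equiv.Perm (Fin 2), ∀ x ∈ stdSimplex ℝ (Fin 2), f (x ∘ σ) = f x)
    (hzero : f (Pi.single 0 1) = 0)
    (hne : ∃ x ∈ stdSimplex ℝ (Fin 2), f x ≠ 0) :
    let Cf : (Fin 2 → ℂ) → ℝ := fun ψ => f fun i => ‖ψ i‖ ^ 2
    let ρ₀ : Matrix (Fin 2) (Fin 2) ℂ := !![1, 0; 0, 0]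
    let K₁ : Matrix (Fin 2) (Fin 2) ℂ := ((Real.sqrt 2 : ℂ))⁻¹ • 1
    let K₂ : Matrix (Fin 2) (Fin 2) ℂ := ((Real.sqrt 2 : ℂ))⁻¹ • !![0, 1; 1, 0]
    let Λρ₀ : Matrix (Fin 2) (Fin 2) ℂ := K₁ * ρ₀ * K₁ᴴ + K₂ * ρ₀ * K₂ᴴ
    Λρ₀ = (2 : ℂ)⁻¹ • 1 ∧
    sSup (pureDecompVals Cf ρ₀) = 0 ∧
    0 < sSup (pureDecompVals Cf Λρ₀) ∧
    sSup (pureDecompVals Cf ρ₀) < sSup (pureDecompVals Cf Λρ₀) := by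
  intro Cf ρ₀ K₁ K₂ Λρ₀
  -- Step 1: Λρ₀ = (2:ℂ)⁻¹ • 1
  have hΛ : Λρ₀ = (2 : ℂ)⁻¹ • 1 := by
    show K₁ * ρ₀ * K₁ᴴ + K₂ * ρ₀ * K₂ᴴ = (2 : ℂ)⁻¹ • 1
    ext i j
    fin_cases i <;> fin_cases j <;>
      simp [ρ₀, K₁, K₂, Matrix.mul_apply, Matrix.vecMul, dotProduct,
        Fin.sum_univ_two, Matrix.one_apply, Complex.conj_ofReal, coa_h2c]
  -- Step 2: pureDecompVals Cf ρ₀ = {0}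
  have hmem0 : (0:ℝ) ∈ pureDecompVals Cf ρ₀ := by
    refine ⟨1, ![1], ![![1, 0]], ?_, ?_, ?_, ?_, ?_⟩
    · intro k; fin_cases k <;> norm_num
    · simp
    · intro k; fin_cases k <;> simp [Fin.sum_univ_two]
    · ext i j
      fin_cases i <;> fin_cases j <;>
        simp [ρ₀, Matrix.vecMulVec_apply, Fin.sum_univ_one, -Matrix.cons_vecMulVec, -Matrix.vecMulVec_cons]
    · have : (fun i => ‖![(1:ℂ), 0] i‖ ^ 2) = (Pi.single 0 1 : Fin 2 → ℝ) := by
        funext i; fin_cases i <;> simp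
      simp [Cf, Fin.sum_univ_one, this, hzero]
  have hsub0 : ∀ x ∈ pureDecompVals Cf ρ₀, x = 0 := by
    rintro x ⟨m, p, ψ, hp, hps, hn, hρ, hx⟩
    -- look at the (1,1) entry
    have h11 : (0:ℝ) = ∑ k, p k * ‖ψ k 1‖ ^ 2 := by
      have := congrFun (congrFun hρ 1) 1
      have hent : ρ₀ 1 1 = (0:ℂ) := by simp [ρ₀]
      rw [hent] at this
      have hrhs : (∑ k, (p k : ℂ) • Matrix.vecMulVec (ψ k) (star (ψ k))) 1 1
          = ((∑ k, p k * ‖ψ k 1‖ ^ 2 : ℝ) : ℂ) := by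
        rw [Matrix.sum_apply]
        push_cast
        refine Finset.sum_congr rfl fun k _ => ?_
        simp only [Matrix.smul_apply, Matrix.vecMulVec_apply, Pi.star_apply, smul_eq_mul]
        rw [RCLike.star_def, Complex.mul_conj, Complex.normSq_eq_norm_sq]
        push_cast
        ring
      rw [hrhs] at this
      exact_mod_cast this
    have hterm := (Finset.sum_eq_zero_iff_of_nonneg
      (fun k _ => mul_nonneg (hp k) (by positivity : (0:ℝ) ≤ ‖ψ k 1‖ ^ 2))).mp
      h11.symm
    rw [hx]
    refine Finset.sum_eq_zero fun k hk => ?_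
    rcases eq_or_lt_of_le (hp k) with hpk | hpk
    · rw [← hpk]; ring
    · have habs1 : ‖ψ k 1‖ ^ 2 = 0 := by
        have := hterm k (Finset.mem_univ k)
        rcases mul_eq_zero.mp this with h | h
        · exact absurd h hpk.ne'
        · exact h
      have habs0 : ‖ψ k 0‖ ^ 2 = 1 := by
        have := hn k
        rw [Fin.sum_univ_two, habs1, add_zero] at this
        exact this
      have hfun : (fun i => ‖ψ k i‖ ^ 2) = (Pi.single 0 1 : Fin 2 → ℝ) := by
        funext i; fin_cases i <;> simp [habs0, habs1]
      have : Cf (ψ k) = 0 := by simp [Cf, hfun, hzero]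
      rw [this]; ring
  have hsSup0 : sSup (pureDecompVals Cf ρ₀) = 0 := by
    have hset : pureDecompVals Cf ρ₀ = {0} := by
      apply Set.eq_singleton_iff_unique_mem.mpr
      exact ⟨hmem0, hsub0⟩
    rw [hset, csSup_singleton]
  -- Step 3: positivity for Λρ₀
  set c : Fin 2 → ℝ := fun _ => (1/2:ℝ) with hc
  have hcmem : c ∈ stdSimplex ℝ (Fin 2) := by
    constructor
    · intro i; norm_num [hc]
    · simp [hc, Fin.sum_univ_two]
  have hfc : 0 < f c := by
    obtain ⟨x, hxs, hxne⟩ := hne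
    have h1 : 0 ≤ f x := coa_nonneg f hconc hsym hzero x hxs
    have h2 : f x ≤ f c := coa_le_center f hconc hsym x hxs
    have : 0 < f x := lt_of_le_of_ne h1 (Ne.symm hxne)
    linarith
  -- the balanced decomposition of the maximally mixed state
  have hmemc : f c ∈ pureDecompVals Cf Λρ₀ := by
    refine ⟨2, ![1/2, 1/2],
      ![![(Real.sqrt 2 : ℂ)⁻¹, (Real.sqrt 2 : ℂ)⁻¹],
        ![(Real.sqrt 2 : ℂ)⁻¹, -(Real.sqrt 2 : ℂ)⁻¹]], ?_, ?_, ?_, ?_, ?_⟩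
    · intro k; fin_cases k <;> norm_num
    · simp [Fin.sum_univ_two]; norm_num
    · intro k; fin_cases k <;>
        simp [Fin.sum_univ_two, coa_habs] <;> norm_num [coa_habs]
    · rw [hΛ]
      ext i j
      fin_cases i <;> fin_cases j <;>
        simp [Matrix.vecMulVec_apply, Fin.sum_univ_two, Matrix.one_apply, -Matrix.cons_vecMulVec, -Matrix.vecMulVec_cons,
          Complex.conj_ofReal, Pi.star_apply, coa_h2c] <;> norm_num
    · have hv : ∀ k : Fin 2, Cf (![![(Real.sqrt 2 : ℂ)⁻¹, (Real.sqrt 2 : ℂ)⁻¹],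
          ![(Real.sqrt 2 : ℂ)⁻¹, -(Real.sqrt 2 : ℂ)⁻¹]] k) = f c := by
        intro k
        have : (fun i => ‖(![![(Real.sqrt 2 : ℂ)⁻¹, (Real.sqrt 2 : ℂ)⁻¹],
            ![(Real.sqrt 2 : ℂ)⁻¹, -(Real.sqrt 2 : ℂ)⁻¹]] k) i‖ ^ 2) = c := by
          funext i
          fin_cases k <;> fin_cases i <;> simp [hc, coa_habs]
        exact congrArg f this
      rw [Fin.sum_univ_two, hv 0, hv 1]
      norm_num
      ring
  have hbdd : BddAbove (pureDecompVals Cf Λρ₀) := by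
    refine ⟨f c, ?_⟩
    rintro x ⟨m, p, ψ, hp, hps, hn, hρ, hx⟩
    rw [hx]
    calc ∑ k, p k * Cf (ψ k) ≤ ∑ k, p k * f c := by
          refine Finset.sum_le_sum fun k _ => ?_
          refine mul_le_mul_of_nonneg_left ?_ (hp k)
          refine coa_le_center f hconc hsym _ ⟨fun i => by positivity, hn k⟩
      _ = f c := by rw [← Finset.sum_mul, hps, one_mul]
  have hpos : 0 < sSup (pureDecompVals Cf Λρ₀) :=
    lt_of_lt_of_le hfc (le_csSup hbdd hmemc)
  exact ⟨hΛ, hsSup0, hpos, by rw [hsSup0]; exact hpos⟩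
end

section
/- For every f ∈ 𝔉 on Ω_{n²} and every density matrix ρ = (ρ_ij) on ℂ^n, the entanglement of assistance of the Schmidt correlated state ρ_mc = Σ_{i,j} ρ_ij |ii⟩⟨jj| equals its coherence of assistance with respect to the product basis: E_a(ρ_mc) = C_a(ρ_mc). -/
open Matrix
open scoped ComplexOrder

open Polynomial in
lemma my_charpoly_diagonal {n : ℕ} (d : Fin n → ℂ) :
    (Matrix.diagonal d).charpoly = ∏ i, (X - C (d i)) := by
  have h : charmatrix (Matrix.diagonal d)
      = Matrix.diagonal (fun i => (X : ℂ[X]) - C (d i)) := by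
    ext i j
    by_cases h : i = j
    · subst h; simp
    · simp [Matrix.charmatrix_apply_ne _ _ _ h, Matrix.diagonal_apply_ne _ h,
        Matrix.diagonal_apply_ne _ h]
  rw [Matrix.charpoly, h, Matrix.det_diagonal]

open Polynomial in
lemma my_charpoly_unitary_conj {n : ℕ} (U A : Matrix (Fin n) (Fin n) ℂ)
    (hU : U * star U = 1) (hU' : star U * U = 1) :
    (U * A * star U).charpoly = A.charpoly := by
  have hmapmul : ∀ B C' : Matrix (Fin n) (Fin n) ℂ,
      (B * C').map (C : ℂ →+* ℂ[X]) = B.map C * C'.map C := fun B C' =>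
    Matrix.map_mul
  have key : charmatrix (U * A * star U)
      = U.map (C : ℂ →+* ℂ[X]) * charmatrix A * (star U).map C := by
    simp only [charmatrix, RingHom.mapMatrix_apply]
    rw [hmapmul, hmapmul, Matrix.mul_sub, Matrix.sub_mul]
    congr 1
    have h1 : U.map (C : ℂ →+* ℂ[X]) * (star U).map C = 1 := by
      rw [← hmapmul, hU, Matrix.map_one _ (map_zero _) (map_one _)]
    calc Matrix.scalar (Fin n) (X : ℂ[X])
        = Matrix.scalar (Fin n) (X : ℂ[X]) * (U.map C * (star U).map C) := by
          rw [h1, mul_one]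
      _ = U.map C * Matrix.scalar (Fin n) (X : ℂ[X]) * (star U).map C := by
          rw [← mul_assoc, Matrix.scalar_commute X (fun r => Commute.all X r) (U.map C)]
  have hdet1 : (U.map (C : ℂ →+* ℂ[X])).det * ((star U).map C).det = 1 := by
    rw [← Matrix.det_mul, ← hmapmul, hU, Matrix.map_one _ (map_zero _) (map_one _), Matrix.det_one]
  rw [Matrix.charpoly, key, Matrix.det_mul, Matrix.det_mul, Matrix.charpoly]
  ring_nf
  rw [mul_comm, ← mul_assoc]
  rw [mul_comm ((star U).map C).det]
  rw [hdet1, one_mul]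

lemma exists_perm_comp_eq {n : ℕ} (a b : Fin n → ℝ)
    (h : Multiset.map a Finset.univ.val = Multiset.map b Finset.univ.val) :
    ∃ σ : Equiv.Perm (Fin n), ∀ i, a i = b (σ i) := by
  have hperm : List.Perm (List.ofFn a) (List.ofFn b) := by
    rw [← Multiset.coe_eq_coe, ← Fin.univ_val_map, ← Fin.univ_val_map]
    exact h
  have h1 : List.ofFn (a ∘ Tuple.sort a) = List.ofFn (b ∘ Tuple.sort b) :=
    List.Perm.eq_of_sortedLE
      (Tuple.monotone_sort a).sortedLE_ofFn (Tuple.monotone_sort b).sortedLE_ofFn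
      (((Tuple.sort a).ofFn_comp_perm a).trans
        (hperm.trans ((Tuple.sort b).ofFn_comp_perm b).symm))
  have h2 : a ∘ Tuple.sort a = b ∘ Tuple.sort b := List.ofFn_injective h1
  refine ⟨(Tuple.sort a).symm.trans (Tuple.sort b), fun i => ?_⟩
  have := congrFun h2 ((Tuple.sort a).symm i)
  simpa using this

open Polynomial in
lemma eig_diag {n : ℕ} (w : Fin n → ℝ) {A : Matrix (Fin n) (Fin n) ℂ}
    (hA : A.IsHermitian) (h : A = Matrix.diagonal (fun i => (w i : ℂ))) :
    ∃ σ : Equiv.Perm (Fin n), ∀ i, hA.eigenvalues i = w (σ i) := by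
  have hc1 : A.charpoly = ∏ i, (X - C ((w i : ℂ))) := by
    rw [h]; exact my_charpoly_diagonal _
  have hUm := (Matrix.IsHermitian.eigenvectorUnitary hA).2
  rw [Unitary.mem_iff] at hUm
  have hc2 : A.charpoly = ∏ i, (X - C ((hA.eigenvalues i : ℂ))) := by
    conv_lhs => rw [hA.spectral_theorem]
    rw [Unitary.conjStarAlgAut_apply, my_charpoly_unitary_conj _ _ hUm.2 hUm.1, my_charpoly_diagonal]
    rfl
  have hroots : Multiset.map (fun i => ((w i : ℂ))) Finset.univ.val
      = Multiset.map (fun i => ((hA.eigenvalues i : ℂ))) Finset.univ.val := by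
    have := congrArg Polynomial.roots (hc1.symm.trans hc2)
    rwa [Finset.prod_eq_multiset_prod, Finset.prod_eq_multiset_prod,
      show (Multiset.map (fun i => X - C ((w i : ℂ))) Finset.univ.val)
          = Multiset.map (fun z => X - C z)
              (Multiset.map (fun i => ((w i : ℂ))) Finset.univ.val) by
        rw [Multiset.map_map]; rfl,
      show (Multiset.map (fun i => X - C ((hA.eigenvalues i : ℂ))) Finset.univ.val)
          = Multiset.map (fun z => X - C z)
              (Multiset.map (fun i => ((hA.eigenvalues i : ℂ))) Finset.univ.val) by
        rw [Multiset.map_map]; rfl,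
      Polynomial.roots_multiset_prod_X_sub_C, Polynomial.roots_multiset_prod_X_sub_C] at this
  have hm : Multiset.map hA.eigenvalues Finset.univ.val = Multiset.map w Finset.univ.val := by
    apply Multiset.map_injective Complex.ofReal_injective
    simp only [Multiset.map_map, Function.comp_def]
    exact hroots.symm
  exact exists_perm_comp_eq _ _ hm

lemma F_eq {n : ℕ} (f : (Fin n × Fin n → ℝ) → ℝ)
    (hsym : ∀ σ : Equiv.Perm (Fin n × Fin n), ∀ x ∈ stdSimplex ℝ (Fin n × Fin n),
      f (x ∘ σ) = f x)
    (Ψ : Fin n × Fin n → ℂ)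
    (hsupp : ∀ a : Fin n × Fin n, a.1 ≠ a.2 → Ψ a = 0)
    (hnorm : ∑ a, ‖Ψ a‖ ^ 2 = 1) :
    f (fun a => if a.1 = a.2 then
        (Matrix.isHermitian_mul_conjTranspose_self (coeffMatrix Ψ)).eigenvalues a.1 else 0)
      = f (fun a => ‖Ψ a‖ ^ 2) := by
  set w : Fin n → ℝ := fun i => ‖Ψ (i, i)‖ ^ 2 with hw
  have hd : coeffMatrix Ψ = Matrix.diagonal (fun i => Ψ (i, i)) := by
    ext i j
    by_cases h : i = j
    · subst h; simp [coeffMatrix]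
    · simp [coeffMatrix, Matrix.diagonal_apply_ne _ h, hsupp (i, j) h]
  have hmat : coeffMatrix Ψ * (coeffMatrix Ψ)ᴴ = Matrix.diagonal (fun i => (w i : ℂ)) := by
    rw [hd, Matrix.diagonal_conjTranspose, Matrix.diagonal_mul_diagonal]
    apply congrArg Matrix.diagonal
    funext i
    rw [Pi.star_apply, Complex.star_def, Complex.mul_conj, hw]
    norm_cast
    exact (Complex.sq_norm _).symm
  obtain ⟨σ, hσ⟩ := eig_diag w (Matrix.isHermitian_mul_conjTranspose_self (coeffMatrix Ψ)) hmat
  set x : Fin n × Fin n → ℝ := fun a => ‖Ψ a‖ ^ 2 with hx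
  have hxs : x ∈ stdSimplex ℝ (Fin n × Fin n) := ⟨fun a => by positivity, hnorm⟩
  have hvec : (fun a : Fin n × Fin n => if a.1 = a.2 then
      (Matrix.isHermitian_mul_conjTranspose_self (coeffMatrix Ψ)).eigenvalues a.1 else 0)
      = x ∘ (Equiv.prodCongr σ σ) := by
    funext a
    obtain ⟨i, j⟩ := a
    by_cases h : i = j
    · subst h
      simp only [if_pos rfl, Function.comp_apply, Equiv.prodCongr_apply, Prod.map]
      exact hσ i
    · simp only [if_neg h, Function.comp_apply, Equiv.prodCongr_apply, Prod.map, hx]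
      rw [hsupp (σ i, σ j) (fun hc => h (σ.injective hc))]
      simp
  rw [hvec, hsym (Equiv.prodCongr σ σ) x hxs]

lemma sum_F_eq {n : ℕ} (f : (Fin n × Fin n → ℝ) → ℝ)
    (hsym : ∀ σ : Equiv.Perm (Fin n × Fin n), ∀ x ∈ stdSimplex ℝ (Fin n × Fin n),
      f (x ∘ σ) = f x)
    (ρ : Matrix (Fin n) (Fin n) ℂ)
    {m : ℕ} {p : Fin m → ℝ} {ψ : Fin m → Fin n × Fin n → ℂ}
    (h0 : ∀ k, 0 ≤ p k)
    (hunit : ∀ k, ∑ i, ‖ψ k i‖ ^ 2 = 1)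
    (hρ : schmidtCorrelated ρ = ∑ k, (p k : ℂ) • Matrix.vecMulVec (ψ k) (star (ψ k))) :
    ∑ k, p k * (fun Ψ => f fun a => if a.1 = a.2 then
        (Matrix.isHermitian_mul_conjTranspose_self (coeffMatrix Ψ)).eigenvalues a.1 else 0) (ψ k)
      = ∑ k, p k * (fun Ψ => f fun a => ‖Ψ a‖ ^ 2) (ψ k) := by
  apply Finset.sum_congr rfl
  intro k _
  rcases eq_or_lt_of_le (h0 k) with h | h
  · rw [← h]; ring
  · -- derive support
    have hsupp : ∀ a : Fin n × Fin n, a.1 ≠ a.2 → ψ k a = 0 := by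
      intro a ha
      have hdiag : (schmidtCorrelated ρ) a a = 0 := by
        simp [schmidtCorrelated, ha]
      rw [hρ] at hdiag
      have hsum : ((∑ j, (p j : ℂ) • Matrix.vecMulVec (ψ j) (star (ψ j))) : Matrix _ _ ℂ) a a
          = ∑ j, ((p j * ‖ψ j a‖ ^ 2 : ℝ) : ℂ) := by
        rw [Matrix.sum_apply]
        apply Finset.sum_congr rfl
        intro j _
        rw [Matrix.smul_apply, Matrix.vecMulVec_apply, Pi.star_apply, smul_eq_mul,
          Complex.star_def, Complex.mul_conj]
        push_cast
        rw [← Complex.sq_norm]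
        push_cast
        ring
      rw [hsum] at hdiag
      rw [← Complex.ofReal_sum] at hdiag
      rw [Complex.ofReal_eq_zero] at hdiag
      have hzero := (Finset.sum_eq_zero_iff_of_nonneg
        (fun j _ => mul_nonneg (h0 j) (by positivity))).mp hdiag k (Finset.mem_univ k)
      have habs : ‖ψ k a‖ ^ 2 = 0 := by
        rcases mul_eq_zero.mp hzero with h' | h'
        · exact absurd h' (ne_of_gt h)
        · exact h'
      have := pow_eq_zero_iff (n := 2) (by norm_num) |>.mp habs
      exact norm_eq_zero.mp this
    exact congrArg (fun t => p k * t) (F_eq f hsym (ψ k) hsupp (hunit k))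

theorem ea_eq_ca_on_schmidt_correlated
    {n : ℕ} [NeZero n] (f : (Fin n × Fin n → ℝ) → ℝ)
    (hconc : ConcaveOn ℝ (stdSimplex ℝ (Fin n × Fin n)) f)
    (hsym : ∀ σ : Equiv.Perm (Fin n × Fin n), ∀ x ∈ stdSimplex ℝ (Fin n × Fin n),
      f (x ∘ σ) = f x)
    (hzero : f (Pi.single (0, 0) 1) = 0)
    (ρ : Matrix (Fin n) (Fin n) ℂ) (hpsd : ρ.PosSemidef) (htr : ρ.trace = 1) :
    sSup (pureDecompVals
        (fun Ψ => f fun a => if a.1 = a.2 then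
          (Matrix.isHermitian_mul_conjTranspose_self (coeffMatrix Ψ)).eigenvalues a.1 else 0)
        (schmidtCorrelated ρ)) =
      sSup (pureDecompVals (fun Ψ => f fun a => ‖Ψ a‖ ^ 2)
        (schmidtCorrelated ρ)) := by
  congr 1
  ext x
  simp only [pureDecompVals, Set.mem_setOf_eq]
  constructor
  · rintro ⟨m, p, ψ, h0, h1, hunit, hρ, rfl⟩
    exact ⟨m, p, ψ, h0, h1, hunit, hρ, (sum_F_eq f hsym ρ h0 hunit hρ)⟩
  · rintro ⟨m, p, ψ, h0, h1, hunit, hρ, rfl⟩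
    exact ⟨m, p, ψ, h0, h1, hunit, hρ, (sum_F_eq f hsym ρ h0 hunit hρ).symm⟩
end

section
/- The coherence of assistance and the entanglement of assistance are in one-to-one correspondence through the generating function: for f, g ∈ 𝔉 on Ω_n, the coherence of assistance functionals C_a^f and C_a^g agree on all density matrices on ℂ^n if and only if the entanglement of assistance functionals E_a^f and E_a^g agree on all density matrices on ℂ^n ⊗ ℂ^n (and either condition holds if and only if f = g on Ω_n). -/
open Matrix
open scoped ComplexOrder

/-- The coherence `C_f(ψ) = f(|ψ₀|²,…,|ψ_{n-1}|²)` of a pure state. -/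
noncomputable def Cf {n : ℕ} (f : (Fin n → ℝ) → ℝ) (ψ : Fin n → ℂ) : ℝ :=
  f fun i => ‖ψ i‖ ^ 2

/-- The entanglement `E_f(Ψ) = f(λ₁,…,λₙ)` of a pure state `Ψ ∈ ℂ^n ⊗ ℂ^n`,
where `λ₁,…,λₙ` are the eigenvalues of `A Aᴴ` with `A` the coefficient matrix of `Ψ`. -/
noncomputable def Ef {n : ℕ} (f : (Fin n → ℝ) → ℝ) (Ψ : Fin n × Fin n → ℂ) : ℝ :=
  f (Matrix.isHermitian_mul_conjTranspose_self (coeffMatrix Ψ)).eigenvalues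


open Finset


section basic
variable {ι : Type*} [Fintype ι]

lemma mem_pureDecompVals_of (F : (ι → ℂ) → ℝ) (ρ : Matrix ι ι ℂ)
    {κ : Type*} [Fintype κ] (p : κ → ℝ) (ψ : κ → ι → ℂ)
    (hp : ∀ k, 0 ≤ p k) (hp1 : ∑ k, p k = 1)
    (hψ : ∀ k, ∑ i, ‖ψ k i‖ ^ 2 = 1)
    (hρ : ρ = ∑ k, (p k : ℂ) • Matrix.vecMulVec (ψ k) (star (ψ k))) :
    (∑ k, p k * F (ψ k)) ∈ pureDecompVals F ρ := by
  classical
  let e := (Fintype.equivFin κ).symm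
  refine ⟨Fintype.card κ, p ∘ e, ψ ∘ e, fun k => hp _, ?_, fun k => hψ _, ?_, ?_⟩
  · exact (e.sum_comp p).trans hp1
  · rw [hρ]; exact (e.sum_comp fun k => (p k : ℂ) • Matrix.vecMulVec (ψ k) (star (ψ k))).symm
  · exact (e.sum_comp fun k => p k * F (ψ k)).symm

lemma pureDecompVals_subset {F G : (ι → ℂ) → ℝ}
    (h : ∀ ψ : ι → ℂ, (∑ i, ‖ψ i‖ ^ 2 = 1) → F ψ = G ψ) (ρ : Matrix ι ι ℂ) :
    pureDecompVals F ρ ⊆ pureDecompVals G ρ := by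
  rintro x ⟨m, p, ψ, hp, hp1, hψ, hρ, rfl⟩
  exact ⟨m, p, ψ, hp, hp1, hψ, hρ, by
    refine Finset.sum_congr rfl fun k _ => ?_
    rw [h (ψ k) (hψ k)]⟩

lemma pureDecompVals_congr {F G : (ι → ℂ) → ℝ}
    (h : ∀ ψ : ι → ℂ, (∑ i, ‖ψ i‖ ^ 2 = 1) → F ψ = G ψ) (ρ : Matrix ι ι ℂ) :
    pureDecompVals F ρ = pureDecompVals G ρ :=
  le_antisymm (pureDecompVals_subset h ρ)
    (pureDecompVals_subset (fun ψ hψ => (h ψ hψ).symm) ρ)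

lemma diag_entry_of_decomp {ρ : Matrix ι ι ℂ} {m : ℕ} {p : Fin m → ℝ} {ψ : Fin m → ι → ℂ}
    (hρ : ρ = ∑ k, (p k : ℂ) • Matrix.vecMulVec (ψ k) (star (ψ k))) (a : ι) :
    ρ a a = ((∑ k, p k * ‖ψ k a‖ ^ 2 : ℝ) : ℂ) := by
  subst hρ
  rw [Matrix.sum_apply]
  push_cast
  refine Finset.sum_congr rfl fun k _ => ?_
  rw [Matrix.smul_apply, Matrix.vecMulVec_apply, Pi.star_apply, smul_eq_mul, Complex.star_def,
    Complex.mul_conj, Complex.normSq_eq_norm_sq]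
  push_cast
  ring

end basic


section signs
variable {n : ℕ}

/-- sign vector -/
noncomputable def sgn (s : Fin n → Bool) (i : Fin n) : ℝ := if s i then 1 else -1

lemma sgn_mul_self (s : Fin n → Bool) (i : Fin n) : sgn s i * sgn s i = 1 := by
  unfold sgn; split <;> norm_num

lemma abs_sgn (s : Fin n → Bool) (i : Fin n) : |sgn s i| = 1 := by
  unfold sgn; split <;> norm_num

lemma sum_sgn_mul_sgn {i j : Fin n} (hij : i ≠ j) :
    ∑ s : Fin n → Bool, sgn s i * sgn s j = 0 := by
  classical
  have hinv : Function.Involutive (fun s : Fin n → Bool => Function.update s i (!s i)) := by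
    intro s
    funext a
    rcases eq_or_ne a i with rfl | ha
    · simp
    · simp [Function.update_of_ne ha]
  have := Equiv.sum_comp hinv.toPerm (fun s : Fin n → Bool => sgn s i * sgn s j)
  have hterm : ∀ s : Fin n → Bool,
      sgn (Function.update s i (!s i)) i * sgn (Function.update s i (!s i)) j
        = -(sgn s i * sgn s j) := by
    intro s
    have h1 : sgn (Function.update s i (!s i)) i = -sgn s i := by
      unfold sgn; rcases h : s i <;> simp [h]
    have h2 : sgn (Function.update s i (!s i)) j = sgn s j := by
      unfold sgn; rw [Function.update_of_ne (Ne.symm hij)]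
    rw [h1, h2]; ring
  have h0 : ∑ s : Fin n → Bool, sgn s i * sgn s j
      = -∑ s : Fin n → Bool, sgn s i * sgn s j := by
    conv_lhs => rw [← this]
    simp only [Function.Involutive.coe_toPerm]
    rw [Finset.sum_congr rfl fun s _ => hterm s, Finset.sum_neg_distrib]
  linarith

lemma card_bool_pos : (0:ℝ) < (Fintype.card (Fin n → Bool) : ℝ) := by
  exact_mod_cast Fintype.card_pos

end signs


section csum
variable {n : ℕ}

lemma sum_sgn_key (i j : Fin n) :
    ∑ s : Fin n → Bool, sgn s i * sgn s j
      = if i = j then (Fintype.card (Fin n → Bool) : ℝ) else 0 := by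
  rcases eq_or_ne i j with rfl | hij
  · simp only [if_pos rfl]
    rw [Finset.sum_congr rfl fun s _ => sgn_mul_self s i]
    simp [Finset.card_univ]
  · rw [if_neg hij]; exact sum_sgn_mul_sgn hij

lemma sum_sgn_weighted (x : Fin n → ℝ) (hx0 : ∀ i, 0 ≤ x i) (i j : Fin n) :
    ∑ s : Fin n → Bool, (Fintype.card (Fin n → Bool) : ℝ)⁻¹
        * (sgn s i * Real.sqrt (x i)) * (sgn s j * Real.sqrt (x j))
      = if i = j then x i else 0 := by
  have h1 : ∑ s : Fin n → Bool, (Fintype.card (Fin n → Bool) : ℝ)⁻¹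
        * (sgn s i * Real.sqrt (x i)) * (sgn s j * Real.sqrt (x j))
      = (Fintype.card (Fin n → Bool) : ℝ)⁻¹ * Real.sqrt (x i) * Real.sqrt (x j)
        * ∑ s : Fin n → Bool, sgn s i * sgn s j := by
    rw [Finset.mul_sum]
    exact Finset.sum_congr rfl fun s _ => by ring
  rw [h1, sum_sgn_key]
  rcases eq_or_ne i j with rfl | hij
  · rw [if_pos rfl, if_pos rfl]
    have hc : (Fintype.card (Fin n → Bool) : ℝ) ≠ 0 := ne_of_gt card_bool_pos
    have h2 := Real.mul_self_sqrt (hx0 i)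
    field_simp
    nlinarith [h2]
  · rw [if_neg hij, if_neg hij, mul_zero]

/-- the sign-vector pure states used in the optimal decomposition -/
noncomputable def sgnVec (x : Fin n → ℝ) (s : Fin n → Bool) (i : Fin n) : ℂ :=
  ((sgn s i * Real.sqrt (x i) : ℝ) : ℂ)

lemma sgnVec_absSq (x : Fin n → ℝ) (hx0 : ∀ i, 0 ≤ x i) (s : Fin n → Bool) :
    (fun i => ‖sgnVec x s i‖ ^ 2) = x := by
  funext i
  rw [sgnVec, Complex.norm_real, Real.norm_eq_abs, sq_abs, mul_pow, Real.sq_sqrt (hx0 i)]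
  rw [sq, sgn_mul_self, one_mul]

lemma sgnVec_unit (x : Fin n → ℝ) (hx : x ∈ stdSimplex ℝ (Fin n)) (s : Fin n → Bool) :
    ∑ i, ‖sgnVec x s i‖ ^ 2 = 1 := by
  have := sgnVec_absSq x hx.1 s
  calc ∑ i, ‖sgnVec x s i‖ ^ 2 = ∑ i, x i := by
        refine Finset.sum_congr rfl fun i _ => ?_
        exact congrFun this i
    _ = 1 := hx.2

lemma sgnVec_decomp (x : Fin n → ℝ) (hx0 : ∀ i, 0 ≤ x i) :
    Matrix.diagonal (fun i => (x i : ℂ))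
      = ∑ s : Fin n → Bool, (((Fintype.card (Fin n → Bool) : ℝ)⁻¹ : ℝ) : ℂ)
          • Matrix.vecMulVec (sgnVec x s) (star (sgnVec x s)) := by
  ext i j
  rw [Matrix.sum_apply]
  have h1 : ∀ s : Fin n → Bool, ((((Fintype.card (Fin n → Bool) : ℝ)⁻¹ : ℝ) : ℂ)
        • Matrix.vecMulVec (sgnVec x s) (star (sgnVec x s))) i j
      = (((Fintype.card (Fin n → Bool) : ℝ)⁻¹
          * (sgn s i * Real.sqrt (x i)) * (sgn s j * Real.sqrt (x j)) : ℝ) : ℂ) := by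
    intro s
    rw [Matrix.smul_apply, Matrix.vecMulVec_apply, Pi.star_apply, smul_eq_mul]
    simp only [sgnVec, Complex.star_def, Complex.conj_ofReal]
    push_cast
    ring
  rw [Finset.sum_congr rfl fun s _ => h1 s, ← Complex.ofReal_sum,
    sum_sgn_weighted x hx0 i j, Matrix.diagonal_apply]
  split <;> simp

end csum


section cside
variable {n : ℕ}

lemma mem_simplex_of_unit {ψ : Fin n → ℂ} (h : ∑ i, ‖ψ i‖ ^ 2 = 1) :
    (fun i => ‖ψ i‖ ^ 2) ∈ stdSimplex ℝ (Fin n) :=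
  ⟨fun i => sq_nonneg _, h⟩

lemma C_isGreatest (f : (Fin n → ℝ) → ℝ) (hconc : ConcaveOn ℝ (stdSimplex ℝ (Fin n)) f)
    {x : Fin n → ℝ} (hx : x ∈ stdSimplex ℝ (Fin n)) :
    IsGreatest (pureDecompVals (Cf f) (Matrix.diagonal fun i => (x i : ℂ))) (f x) := by
  constructor
  · have hval : f x = ∑ s : Fin n → Bool,
        (Fintype.card (Fin n → Bool) : ℝ)⁻¹ * Cf f (sgnVec x s) := by
      have hCf : ∀ s : Fin n → Bool, Cf f (sgnVec x s) = f x := fun s => by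
        rw [Cf, sgnVec_absSq x hx.1 s]
      rw [Finset.sum_congr rfl fun s _ => by rw [hCf s]]
      rw [Finset.sum_const, Finset.card_univ, nsmul_eq_mul]
      field_simp
    rw [hval]
    exact mem_pureDecompVals_of (Cf f) _ _ _
      (fun _ => inv_nonneg.2 (le_of_lt card_bool_pos)) (by
        rw [Finset.sum_const, Finset.card_univ, nsmul_eq_mul]
        exact mul_inv_cancel₀ (ne_of_gt (card_bool_pos (n := n))))
      (sgnVec_unit x hx) (sgnVec_decomp x hx.1)
  · rintro y ⟨m, p, ψ, hp, hp1, hψ, hρ, rfl⟩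
    set q : Fin m → Fin n → ℝ := fun k i => ‖ψ k i‖ ^ 2 with hq
    have hqmem : ∀ k ∈ Finset.univ, q k ∈ stdSimplex ℝ (Fin n) :=
      fun k _ => mem_simplex_of_unit (hψ k)
    have hx' : ∑ k ∈ Finset.univ, p k • q k = x := by
      funext i
      have hd := diag_entry_of_decomp hρ i
      rw [Matrix.diagonal_apply_eq] at hd
      have : x i = ∑ k, p k * ‖ψ k i‖ ^ 2 := by exact_mod_cast hd
      rw [Finset.sum_apply]
      exact this.symm
    have hj := hconc.le_map_sum (fun k _ => hp k) hp1 hqmem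
    rw [hx'] at hj
    calc ∑ k, p k * Cf f (ψ k) = ∑ k ∈ Finset.univ, p k • f (q k) :=
          Finset.sum_congr rfl fun k _ => rfl
      _ ≤ f x := hj

lemma csSup_C (f : (Fin n → ℝ) → ℝ) (hconc : ConcaveOn ℝ (stdSimplex ℝ (Fin n)) f)
    {x : Fin n → ℝ} (hx : x ∈ stdSimplex ℝ (Fin n)) :
    sSup (pureDecompVals (Cf f) (Matrix.diagonal fun i => (x i : ℂ))) = f x :=
  (C_isGreatest f hconc hx).csSup_eq

end cside


section eigen
open Polynomial
variable {n : ℕ}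

lemma charpoly_conj_units {m : Type*} [Fintype m] [DecidableEq m]
    (U B V : Matrix m m ℂ) (hUV : U * V = 1) :
    (U * B * V).charpoly = B.charpoly := by
  have hU' : U.map C * V.map C = 1 := by
    rw [← Matrix.map_mul, hUV, Matrix.map_one C C_0 C_1]
  have hsU : U.map C * Matrix.scalar m (X : ℂ[X]) = Matrix.scalar m (X : ℂ[X]) * U.map C :=
    ((Matrix.scalar_commute (X : ℂ[X]) (fun r => Commute.all _ r) (U.map C)).symm).eq
  have hscalar : U.map C * Matrix.scalar m (X : ℂ[X]) * V.map C = Matrix.scalar m (X : ℂ[X]) := by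
    rw [hsU, mul_assoc, hU', mul_one]
  have hcm : Matrix.charmatrix (U * B * V)
      = U.map C * Matrix.charmatrix B * V.map C := by
    simp only [Matrix.charmatrix, RingHom.mapMatrix_apply, Matrix.mul_sub, Matrix.sub_mul]
    rw [hscalar, Matrix.map_mul, Matrix.map_mul]
  rw [Matrix.charpoly, Matrix.charpoly, hcm, Matrix.det_mul, Matrix.det_mul]
  have hdet : (U.map C).det * (V.map C).det = 1 := by
    rw [← Matrix.det_mul, hU', Matrix.det_one]
  calc (U.map C).det * (Matrix.charmatrix B).det * (V.map C).det
      = (Matrix.charmatrix B).det * ((U.map C).det * (V.map C).det) := by ring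
    _ = (Matrix.charmatrix B).det := by rw [hdet, mul_one]

lemma charpoly_diagonal_eq (c : Fin n → ℂ) :
    (Matrix.diagonal c).charpoly
      = ((Finset.univ.val.map c).map fun a => X - C a).prod := by
  rw [Matrix.charpoly_of_upperTriangular _ (Matrix.blockTriangular_diagonal c),
    Finset.prod_eq_multiset_prod, Multiset.map_map]
  refine congrArg _ (Multiset.map_congr rfl fun i _ => ?_)
  rw [Function.comp_apply, Matrix.diagonal_apply_eq]

lemma exists_comp_perm_eq {u v : Fin n → ℝ}
    (h : Multiset.map u Finset.univ.val = Multiset.map v Finset.univ.val) :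
    ∃ σ : Equiv.Perm (Fin n), v = u ∘ σ := by
  have hl : (↑(List.ofFn u) : Multiset ℝ) = (↑(List.ofFn v) : Multiset ℝ) := by
    rwa [Fin.univ_val_map, Fin.univ_val_map] at h
  have hperm : List.Perm (List.ofFn u) (List.ofFn v) := Multiset.coe_eq_coe.mp hl
  have h1 : List.Perm (List.ofFn (u ∘ Tuple.sort u)) (List.ofFn (v ∘ Tuple.sort v)) :=
    ((Tuple.sort u).ofFn_comp_perm u).trans
      (hperm.trans ((Tuple.sort v).ofFn_comp_perm v).symm)
  have h2 : u ∘ Tuple.sort u = v ∘ Tuple.sort v :=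
    List.ofFn_injective (List.Perm.eq_of_sortedLE
      (Tuple.monotone_sort u).sortedLE_ofFn (Tuple.monotone_sort v).sortedLE_ofFn h1)
  refine ⟨(Tuple.sort v).symm.trans (Tuple.sort u), funext fun x => ?_⟩
  have := congrFun h2 ((Tuple.sort v).symm x)
  simpa using this.symm

lemma eig_diagonal (d : Fin n → ℝ) (hd : (Matrix.diagonal fun i => (d i : ℂ)).IsHermitian) :
    ∃ σ : Equiv.Perm (Fin n), hd.eigenvalues = d ∘ σ := by
  have hsp := hd.spectral_theorem
  set U := (Matrix.IsHermitian.eigenvectorUnitary hd : Matrix (Fin n) (Fin n) ℂ) with hU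
  have hUV : U * star U = 1 := Matrix.mem_unitaryGroup_iff.mp (Matrix.IsHermitian.eigenvectorUnitary hd).2
  have hcp : (Matrix.diagonal fun i => (d i : ℂ)).charpoly
      = (Matrix.diagonal (RCLike.ofReal ∘ hd.eigenvalues) : Matrix (Fin n) (Fin n) ℂ).charpoly := by
    conv_lhs => rw [hsp, Unitary.conjStarAlgAut_apply]
    exact charpoly_conj_units U _ (star U) hUV
  have hre : (Matrix.diagonal (RCLike.ofReal ∘ hd.eigenvalues) : Matrix (Fin n) (Fin n) ℂ)
      = Matrix.diagonal fun i => ((hd.eigenvalues i : ℝ) : ℂ) := rfl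
  rw [hre, charpoly_diagonal_eq, charpoly_diagonal_eq] at hcp
  have hroots := congrArg Polynomial.roots hcp
  rw [Polynomial.roots_multiset_prod_X_sub_C, Polynomial.roots_multiset_prod_X_sub_C] at hroots
  have hmaps : Multiset.map ((↑) : ℝ → ℂ) (Multiset.map d Finset.univ.val)
      = Multiset.map ((↑) : ℝ → ℂ) (Multiset.map hd.eigenvalues Finset.univ.val) := by
    rw [Multiset.map_map, Multiset.map_map]
    exact hroots
  exact exists_comp_perm_eq (Multiset.map_injective Complex.ofReal_injective hmaps)

lemma eigenvalues_congr {m : Type*} [Fintype m] [DecidableEq m] {A B : Matrix m m ℂ}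
    (h : A = B) (hA : A.IsHermitian) (hB : B.IsHermitian) :
    hA.eigenvalues = hB.eigenvalues := by subst h; rfl

lemma sum_eigenvalues_eq_trace {m : Type*} [Fintype m] [DecidableEq m] {A : Matrix m m ℂ}
    (hA : A.IsHermitian) :
    ((∑ i, hA.eigenvalues i : ℝ) : ℂ) = A.trace := by
  exact (Complex.ofReal_sum _ _).trans hA.trace_eq_sum_eigenvalues.symm

end eigen


section eside
variable {n : ℕ}

/-- the "classically correlated" diagonal state on the product space -/
noncomputable def D2 (x : Fin n → ℝ) : Matrix (Fin n × Fin n) (Fin n × Fin n) ℂ :=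
  Matrix.diagonal fun a => if a.1 = a.2 then (x a.1 : ℂ) else 0

lemma eig_mem_simplex {Ψ : Fin n × Fin n → ℂ} (h : ∑ a, ‖Ψ a‖ ^ 2 = 1) :
    (Matrix.isHermitian_mul_conjTranspose_self (coeffMatrix Ψ)).eigenvalues
      ∈ stdSimplex ℝ (Fin n) := by
  constructor
  · exact fun i => Matrix.eigenvalues_self_mul_conjTranspose_nonneg _ i
  · have h1 := sum_eigenvalues_eq_trace (Matrix.isHermitian_mul_conjTranspose_self (coeffMatrix Ψ))
    have h2 : (coeffMatrix Ψ * (coeffMatrix Ψ)ᴴ).trace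
        = ((∑ a : Fin n × Fin n, ‖Ψ a‖ ^ 2 : ℝ) : ℂ) := by
      rw [Matrix.trace]
      push_cast
      rw [Fintype.sum_prod_type]
      refine Finset.sum_congr rfl fun i _ => ?_
      rw [Matrix.diag_apply, Matrix.mul_apply]
      refine Finset.sum_congr rfl fun j _ => ?_
      rw [Matrix.conjTranspose_apply]
      show Ψ (i, j) * star (Ψ (i, j)) = _
      rw [Complex.star_def, Complex.mul_conj, Complex.normSq_eq_norm_sq]
      push_cast
      ring
    rw [h2, h] at h1
    exact_mod_cast h1

lemma Ef_of_diagSupport (f : (Fin n → ℝ) → ℝ)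
    (hsym : ∀ σ : Equiv.Perm (Fin n), ∀ x ∈ stdSimplex ℝ (Fin n), f (x ∘ σ) = f x)
    {Ψ : Fin n × Fin n → ℂ} (hoff : ∀ i j : Fin n, i ≠ j → Ψ (i, j) = 0)
    (hq : (fun i => ‖Ψ (i, i)‖ ^ 2) ∈ stdSimplex ℝ (Fin n)) :
    Ef f Ψ = f fun i => ‖Ψ (i, i)‖ ^ 2 := by
  have hA : coeffMatrix Ψ = Matrix.diagonal fun i => Ψ (i, i) := by
    ext i j
    rcases eq_or_ne i j with rfl | hij
    · rw [Matrix.diagonal_apply_eq]; rfl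
    · rw [Matrix.diagonal_apply_ne _ hij]; exact hoff i j hij
  have hAAH : coeffMatrix Ψ * (coeffMatrix Ψ)ᴴ
      = Matrix.diagonal fun i => ((‖Ψ (i, i)‖ ^ 2 : ℝ) : ℂ) := by
    rw [hA, Matrix.diagonal_conjTranspose, Matrix.diagonal_mul_diagonal]
    refine congrArg Matrix.diagonal (funext fun i => ?_)
    rw [Pi.star_apply, Complex.star_def, Complex.mul_conj, Complex.normSq_eq_norm_sq]
  have hherm : (Matrix.diagonal fun i => ((‖Ψ (i, i)‖ ^ 2 : ℝ) : ℂ)).IsHermitian :=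
    hAAH ▸ Matrix.isHermitian_mul_conjTranspose_self (coeffMatrix Ψ)
  obtain ⟨σ, hσ⟩ := eig_diagonal (fun i => ‖Ψ (i, i)‖ ^ 2) hherm
  rw [Ef, eigenvalues_congr hAAH (Matrix.isHermitian_mul_conjTranspose_self (coeffMatrix Ψ)) hherm,
    hσ]
  exact hsym σ _ hq

lemma D2_posSemidef {x : Fin n → ℝ} (hx0 : ∀ i, 0 ≤ x i) : (D2 x).PosSemidef := by
  rw [D2, Matrix.posSemidef_diagonal_iff]
  intro a
  split
  · exact_mod_cast hx0 a.1
  · exact le_refl 0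
  
lemma D2_trace {x : Fin n → ℝ} (hx1 : ∑ i, x i = 1) : (D2 x).trace = 1 := by
  rw [D2, Matrix.trace_diagonal, Fintype.sum_prod_type]
  have : ∀ i : Fin n, (∑ j : Fin n, if i = j then (x i : ℂ) else 0) = (x i : ℂ) := by
    intro i
    rw [Finset.sum_ite_eq]
    simp
  rw [Finset.sum_congr rfl fun i _ => this i]
  exact_mod_cast congrArg (Complex.ofReal) hx1

end eside


section egreat
variable {n : ℕ} [NeZero n]

noncomputable def sgnVec2 (x : Fin n → ℝ) (s : Fin n → Bool) : Fin n × Fin n → ℂ :=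
  fun a => if a.1 = a.2 then sgnVec x s a.1 else 0

lemma sgnVec2_absSq (x : Fin n → ℝ) (s : Fin n → Bool) (i j : Fin n) :
    ‖sgnVec2 x s (i, j)‖ ^ 2
      = if i = j then ‖sgnVec x s i‖ ^ 2 else 0 := by
  unfold sgnVec2
  by_cases h : i = j
  · simp [h]
  · simp [h]

lemma sgnVec2_unit (x : Fin n → ℝ) (hx : x ∈ stdSimplex ℝ (Fin n)) (s : Fin n → Bool) :
    ∑ a : Fin n × Fin n, ‖sgnVec2 x s a‖ ^ 2 = 1 := by
  rw [Fintype.sum_prod_type]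
  have h1 : ∀ i : Fin n, (∑ j, ‖sgnVec2 x s (i, j)‖ ^ 2)
      = ‖sgnVec x s i‖ ^ 2 := by
    intro i
    rw [Finset.sum_congr rfl fun j _ => sgnVec2_absSq x s i j, Finset.sum_ite_eq]
    simp
  rw [Finset.sum_congr rfl fun i _ => h1 i]
  exact sgnVec_unit x hx s

lemma sgnVec2_diagfun (x : Fin n → ℝ) (hx0 : ∀ i, 0 ≤ x i) (s : Fin n → Bool) :
    (fun i => ‖sgnVec2 x s (i, i)‖ ^ 2) = x := by
  funext i
  rw [sgnVec2_absSq, if_pos rfl]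
  exact congrFun (sgnVec_absSq x hx0 s) i

lemma sgnVec2_decomp (x : Fin n → ℝ) (hx0 : ∀ i, 0 ≤ x i) :
    D2 x = ∑ s : Fin n → Bool, (((Fintype.card (Fin n → Bool) : ℝ)⁻¹ : ℝ) : ℂ)
        • Matrix.vecMulVec (sgnVec2 x s) (star (sgnVec2 x s)) := by
  ext ⟨i, j⟩ ⟨k, l⟩
  rw [Matrix.sum_apply]
  by_cases hij : i = j
  · by_cases hkl : k = l
    · subst hij; subst hkl
      have hterm : ∀ s : Fin n → Bool,
          ((((Fintype.card (Fin n → Bool) : ℝ)⁻¹ : ℝ) : ℂ)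
            • Matrix.vecMulVec (sgnVec2 x s) (star (sgnVec2 x s))) (i, i) (k, k)
          = ((((Fintype.card (Fin n → Bool) : ℝ)⁻¹ : ℝ) : ℂ)
            • Matrix.vecMulVec (sgnVec x s) (star (sgnVec x s))) i k := by
        intro s
        rw [Matrix.smul_apply, Matrix.smul_apply, Matrix.vecMulVec_apply,
          Matrix.vecMulVec_apply, Pi.star_apply, Pi.star_apply]
        have e1 : sgnVec2 x s (i, i) = sgnVec x s i := if_pos rfl
        have e2 : sgnVec2 x s (k, k) = sgnVec x s k := if_pos rfl
        rw [e1, e2]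
      rw [Finset.sum_congr rfl fun s _ => hterm s]
      have h2 : Matrix.diagonal (fun i => (x i : ℂ)) i k
          = ∑ s : Fin n → Bool, ((((Fintype.card (Fin n → Bool) : ℝ)⁻¹ : ℝ) : ℂ)
              • Matrix.vecMulVec (sgnVec x s) (star (sgnVec x s))) i k := by
        conv_lhs => rw [sgnVec_decomp x hx0]
        rw [Matrix.sum_apply]
      rw [← h2]
      unfold D2
      rcases eq_or_ne i k with rfl | h
      · rw [Matrix.diagonal_apply_eq, Matrix.diagonal_apply_eq, if_pos rfl]
      · rw [Matrix.diagonal_apply_ne _ h, Matrix.diagonal_apply_ne]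
        exact fun hc => h (congrArg Prod.fst hc)
    · have hD : D2 x (i, j) (k, l) = 0 := by
        unfold D2
        by_cases hab : ((i, j) : Fin n × Fin n) = (k, l)
        · rw [hab, Matrix.diagonal_apply_eq]; exact if_neg hkl
        · rw [Matrix.diagonal_apply_ne _ hab]
      rw [hD]
      refine (Finset.sum_eq_zero fun s _ => ?_).symm
      rw [Matrix.smul_apply, Matrix.vecMulVec_apply, Pi.star_apply]
      have : sgnVec2 x s (k, l) = 0 := if_neg hkl
      rw [this]
      simp
  · have hD : D2 x (i, j) (k, l) = 0 := by
      unfold D2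
      by_cases hab : ((i, j) : Fin n × Fin n) = (k, l)
      · rw [hab, Matrix.diagonal_apply_eq]
        rw [← hab]
        exact if_neg hij
      · rw [Matrix.diagonal_apply_ne _ hab]
    rw [hD]
    refine (Finset.sum_eq_zero fun s _ => ?_).symm
    rw [Matrix.smul_apply, Matrix.vecMulVec_apply]
    have : sgnVec2 x s (i, j) = 0 := if_neg hij
    rw [this]
    simp

lemma E_isGreatest (f : (Fin n → ℝ) → ℝ) (hconc : ConcaveOn ℝ (stdSimplex ℝ (Fin n)) f)
    (hsym : ∀ σ : Equiv.Perm (Fin n), ∀ x ∈ stdSimplex ℝ (Fin n), f (x ∘ σ) = f x)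
    {x : Fin n → ℝ} (hx : x ∈ stdSimplex ℝ (Fin n)) :
    IsGreatest (pureDecompVals (Ef f) (D2 x)) (f x) := by
  classical
  constructor
  · have hEfs : ∀ s : Fin n → Bool, Ef f (sgnVec2 x s) = f x := by
      intro s
      have hfun := sgnVec2_diagfun x hx.1 s
      have := Ef_of_diagSupport f hsym (Ψ := sgnVec2 x s)
        (fun i j hij => if_neg hij) (by rw [hfun]; exact hx)
      rw [this, hfun]
    have hval : f x = ∑ s : Fin n → Bool,
        (Fintype.card (Fin n → Bool) : ℝ)⁻¹ * Ef f (sgnVec2 x s) := by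
      rw [Finset.sum_congr rfl fun s _ => by rw [hEfs s]]
      rw [Finset.sum_const, Finset.card_univ, nsmul_eq_mul]
      field_simp
    rw [hval]
    exact mem_pureDecompVals_of (Ef f) _ _ _
      (fun _ => inv_nonneg.2 (le_of_lt card_bool_pos)) (by
        rw [Finset.sum_const, Finset.card_univ, nsmul_eq_mul]
        exact mul_inv_cancel₀ (ne_of_gt (card_bool_pos (n := n))))
      (sgnVec2_unit x hx) (sgnVec2_decomp x hx.1)
  · rintro y ⟨m, p, ψ, hp, hp1, hψ, hρ, rfl⟩
    have hoff : ∀ k, p k ≠ 0 → ∀ i j : Fin n, i ≠ j → ψ k (i, j) = 0 := by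
      intro k hk i j hij
      have hd := diag_entry_of_decomp hρ (i, j)
      have hD : D2 x (i, j) (i, j) = 0 := by
        unfold D2; rw [Matrix.diagonal_apply_eq]; exact if_neg hij
      rw [hD] at hd
      have h0 : (∑ k, p k * ‖ψ k (i, j)‖ ^ 2) = 0 := by exact_mod_cast hd.symm
      have h1 := (Finset.sum_eq_zero_iff_of_nonneg
        (fun k _ => mul_nonneg (hp k) (sq_nonneg _))).mp h0 k (Finset.mem_univ k)
      rcases mul_eq_zero.mp h1 with h | h
      · exact absurd h hk
      · rw [sq_eq_zero_iff] at h
        exact norm_eq_zero.mp h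
    have hqone : ∀ k, p k ≠ 0 → ∑ i, ‖ψ k (i, i)‖ ^ 2 = 1 := by
      intro k hk
      have hu := hψ k
      rw [Fintype.sum_prod_type] at hu
      rw [← hu]
      refine Finset.sum_congr rfl fun i _ => ?_
      have hsingle : (∑ j, ‖ψ k (i, j)‖ ^ 2) = ‖ψ k (i, i)‖ ^ 2 := by
        refine Finset.sum_eq_single i ?_ ?_
        · intro j _ hji
          rw [hoff k hk i j (fun hc => hji hc.symm)]
          simp
        · intro h; exact absurd (Finset.mem_univ i) h
      rw [hsingle]
    set q : Fin m → Fin n → ℝ :=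
      fun k => if p k = 0 then Pi.single (0 : Fin n) 1
        else fun i => ‖ψ k (i, i)‖ ^ 2 with hqdef
    have hqmem : ∀ k ∈ Finset.univ, q k ∈ stdSimplex ℝ (Fin n) := by
      intro k _
      by_cases hk : p k = 0
      · simp only [hqdef, if_pos hk]
        refine ⟨fun i => ?_, ?_⟩
        · rw [Pi.single_apply]; split <;> norm_num
        · rw [Finset.sum_pi_single']; simp
      · simp only [hqdef, if_neg hk]
        exact ⟨fun i => sq_nonneg _, hqone k hk⟩
    have hEf : ∀ k, p k * Ef f (ψ k) = p k • f (q k) := by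
      intro k
      by_cases hk : p k = 0
      · rw [hk]; simp
      · simp only [hqdef, if_neg hk, smul_eq_mul]
        congr 1
        exact Ef_of_diagSupport f hsym (hoff k hk) ⟨fun i => sq_nonneg _, hqone k hk⟩
    have hxq : ∑ k ∈ Finset.univ, p k • q k = x := by
      funext i
      rw [Finset.sum_apply]
      have hterm : ∀ k, (p k • q k) i = p k * ‖ψ k (i, i)‖ ^ 2 := by
        intro k
        by_cases hk : p k = 0
        · rw [Pi.smul_apply, hk]; simp
        · rw [Pi.smul_apply, hqdef]; simp only [if_neg hk]; rfl
      rw [Finset.sum_congr rfl fun k _ => hterm k]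
      have hd := diag_entry_of_decomp hρ (i, i)
      have hD : D2 x (i, i) (i, i) = (x i : ℂ) := by
        unfold D2; rw [Matrix.diagonal_apply_eq]; exact if_pos rfl
      rw [hD] at hd
      exact_mod_cast hd.symm
    have hj := hconc.le_map_sum (fun k _ => hp k) hp1 hqmem
    rw [hxq] at hj
    calc ∑ k, p k * Ef f (ψ k) = ∑ k ∈ Finset.univ, p k • f (q k) :=
          Finset.sum_congr rfl fun k _ => hEf k
      _ ≤ f x := hj

lemma csSup_E (f : (Fin n → ℝ) → ℝ) (hconc : ConcaveOn ℝ (stdSimplex ℝ (Fin n)) f)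
    (hsym : ∀ σ : Equiv.Perm (Fin n), ∀ x ∈ stdSimplex ℝ (Fin n), f (x ∘ σ) = f x)
    {x : Fin n → ℝ} (hx : x ∈ stdSimplex ℝ (Fin n)) :
    sSup (pureDecompVals (Ef f) (D2 x)) = f x :=
  (E_isGreatest f hconc hsym hx).csSup_eq

end egreat


theorem assistance_one_to_one_correspondence
    {n : ℕ} [NeZero n] (f g : (Fin n → ℝ) → ℝ)
    (hconcf : ConcaveOn ℝ (stdSimplex ℝ (Fin n)) f)
    (hsymf : ∀ σ : Equiv.Perm (Fin n), ∀ x ∈ stdSimplex ℝ (Fin n), f (x ∘ σ) = f x)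
    (hzerof : f (Pi.single 0 1) = 0)
    (hconcg : ConcaveOn ℝ (stdSimplex ℝ (Fin n)) g)
    (hsymg : ∀ σ : Equiv.Perm (Fin n), ∀ x ∈ stdSimplex ℝ (Fin n), g (x ∘ σ) = g x)
    (hzerog : g (Pi.single 0 1) = 0) :
    ((∀ ρ : Matrix (Fin n) (Fin n) ℂ, ρ.PosSemidef → ρ.trace = 1 →
        sSup (pureDecompVals (Cf f) ρ) = sSup (pureDecompVals (Cf g) ρ)) ↔
      (∀ ρ : Matrix (Fin n × Fin n) (Fin n × Fin n) ℂ, ρ.PosSemidef → ρ.trace = 1 →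
        sSup (pureDecompVals (Ef f) ρ) = sSup (pureDecompVals (Ef g) ρ))) ∧
    ((∀ ρ : Matrix (Fin n) (Fin n) ℂ, ρ.PosSemidef → ρ.trace = 1 →
        sSup (pureDecompVals (Cf f) ρ) = sSup (pureDecompVals (Cf g) ρ)) ↔
      (∀ x ∈ stdSimplex ℝ (Fin n), f x = g x)) := by
  have hCP : (∀ ρ : Matrix (Fin n) (Fin n) ℂ, ρ.PosSemidef → ρ.trace = 1 →
      sSup (pureDecompVals (Cf f) ρ) = sSup (pureDecompVals (Cf g) ρ)) ↔
      (∀ x ∈ stdSimplex ℝ (Fin n), f x = g x) := by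
    constructor
    · intro hC x hx
      have hpsd : (Matrix.diagonal fun i => (x i : ℂ)).PosSemidef := by
        rw [Matrix.posSemidef_diagonal_iff]
        intro i
        exact_mod_cast hx.1 i
      have htr : (Matrix.diagonal fun i => (x i : ℂ)).trace = 1 := by
        rw [Matrix.trace_diagonal]
        exact_mod_cast congrArg Complex.ofReal hx.2
      have h := hC _ hpsd htr
      rw [csSup_C f hconcf hx, csSup_C g hconcg hx] at h
      exact h
    · intro hfg ρ _ _
      rw [pureDecompVals_congr (F := Cf f) (G := Cf g)
        (fun ψ hψ => hfg _ (mem_simplex_of_unit hψ)) ρ]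
  have hEP : (∀ ρ : Matrix (Fin n × Fin n) (Fin n × Fin n) ℂ, ρ.PosSemidef → ρ.trace = 1 →
      sSup (pureDecompVals (Ef f) ρ) = sSup (pureDecompVals (Ef g) ρ)) ↔
      (∀ x ∈ stdSimplex ℝ (Fin n), f x = g x) := by
    constructor
    · intro hE x hx
      have h := hE (D2 x) (D2_posSemidef hx.1) (D2_trace hx.2)
      rw [csSup_E f hconcf hsymf hx, csSup_E g hconcg hsymg hx] at h
      exact h
    · intro hfg ρ _ _
      rw [pureDecompVals_congr (F := Ef f) (G := Ef g)
        (fun Ψ hΨ => hfg _ (eig_mem_simplex hΨ)) ρ]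
  exact ⟨hCP.trans hEP.symm, hCP⟩
end

section
/- For the concurrence-type function f(p) = √(2(1 − Σ_i p_i²)) on Ω_n, the coherence of assistance of any density matrix ρ on ℂ^n is bounded above by the diagonal of ρ: C_a(ρ) ≤ √(2(1 − Σ_i ρ_ii²)), where ρ_ii are the diagonal entries of ρ in the reference basis; equivalently, for every pure state decomposition ρ = Σ_k p_k ψ_k ψ_k† one has Σ_k p_k √(2(1 − Σ_i |(ψ_k)_i|⁴)) ≤ √(2(1 − Σ_i ρ_ii²)). -/
open Matrix
open scoped ComplexOrder

/-- concavity of sqrt via Cauchy–Schwarz -/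
lemma sum_mul_sqrt_le {m : ℕ} (p a : Fin m → ℝ) (hp : ∀ k, 0 ≤ p k)
    (hs : ∑ k, p k = 1) (ha : ∀ k, 0 ≤ a k) :
    ∑ k, p k * Real.sqrt (a k) ≤ Real.sqrt (∑ k, p k * a k) := by
  have hA : 0 ≤ ∑ k, p k * a k :=
    Finset.sum_nonneg fun k _ => mul_nonneg (hp k) (ha k)
  have h0 : 0 ≤ ∑ k, p k * Real.sqrt (a k) :=
    Finset.sum_nonneg fun k _ => mul_nonneg (hp k) (Real.sqrt_nonneg _)
  rw [Real.le_sqrt h0 hA]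
  calc (∑ k, p k * Real.sqrt (a k)) ^ 2
      = (∑ k, Real.sqrt (p k) * (Real.sqrt (p k) * Real.sqrt (a k))) ^ 2 := by
        congr 1
        refine Finset.sum_congr rfl fun k _ => ?_
        rw [← mul_assoc, Real.mul_self_sqrt (hp k)]
    _ ≤ (∑ k, Real.sqrt (p k) ^ 2) * ∑ k, (Real.sqrt (p k) * Real.sqrt (a k)) ^ 2 :=
        Finset.sum_mul_sq_le_sq_mul_sq _ _ _
    _ = ∑ k, p k * a k := by
        rw [show (∑ k, Real.sqrt (p k) ^ 2) = 1 by
          rw [← hs]; exact Finset.sum_congr rfl fun k _ => Real.sq_sqrt (hp k)]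
        rw [one_mul]
        refine Finset.sum_congr rfl fun k _ => ?_
        rw [mul_pow, Real.sq_sqrt (hp k), Real.sq_sqrt (ha k)]

/-- convexity of square via Cauchy–Schwarz -/
lemma sq_sum_le {m : ℕ} (p x : Fin m → ℝ) (hp : ∀ k, 0 ≤ p k)
    (hs : ∑ k, p k = 1) :
    (∑ k, p k * x k) ^ 2 ≤ ∑ k, p k * x k ^ 2 := by
  calc (∑ k, p k * x k) ^ 2
      = (∑ k, Real.sqrt (p k) * (Real.sqrt (p k) * x k)) ^ 2 := by
        congr 1
        refine Finset.sum_congr rfl fun k _ => ?_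
        rw [← mul_assoc, Real.mul_self_sqrt (hp k)]
    _ ≤ (∑ k, Real.sqrt (p k) ^ 2) * ∑ k, (Real.sqrt (p k) * x k) ^ 2 :=
        Finset.sum_mul_sq_le_sq_mul_sq _ _ _
    _ = ∑ k, p k * x k ^ 2 := by
        rw [show (∑ k, Real.sqrt (p k) ^ 2) = 1 by
          rw [← hs]; exact Finset.sum_congr rfl fun k _ => Real.sq_sqrt (hp k)]
        rw [one_mul]
        refine Finset.sum_congr rfl fun k _ => ?_
        rw [mul_pow, Real.sq_sqrt (hp k)]

theorem concurrence_coherence_of_assistance_upper_bound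
    {n : ℕ} (ρ : Matrix (Fin n) (Fin n) ℂ) (hpsd : ρ.PosSemidef) (htr : ρ.trace = 1) :
    sSup (pureDecompVals
        (fun ψ => Real.sqrt (2 * (1 - ∑ i, ‖ψ i‖ ^ 4))) ρ) ≤
      Real.sqrt (2 * (1 - ∑ i, (ρ i i).re ^ 2)) ∧
    ∀ (m : ℕ) (p : Fin m → ℝ) (ψ : Fin m → Fin n → ℂ),
      (∀ k, 0 ≤ p k) → (∑ k, p k = 1) →
      (∀ k, ∑ i, ‖ψ k i‖ ^ 2 = 1) →
      ρ = ∑ k, (p k : ℂ) • Matrix.vecMulVec (ψ k) (star (ψ k)) →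
      ∑ k, p k * Real.sqrt (2 * (1 - ∑ i, ‖ψ k i‖ ^ 4)) ≤
        Real.sqrt (2 * (1 - ∑ i, (ρ i i).re ^ 2)) := by
  have main : ∀ (m : ℕ) (p : Fin m → ℝ) (ψ : Fin m → Fin n → ℂ),
      (∀ k, 0 ≤ p k) → (∑ k, p k = 1) →
      (∀ k, ∑ i, ‖ψ k i‖ ^ 2 = 1) →
      ρ = ∑ k, (p k : ℂ) • Matrix.vecMulVec (ψ k) (star (ψ k)) →
      ∑ k, p k * Real.sqrt (2 * (1 - ∑ i, ‖ψ k i‖ ^ 4)) ≤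
        Real.sqrt (2 * (1 - ∑ i, (ρ i i).re ^ 2)) := by
    intro m p ψ hp hs hnorm hdec
    -- q k i = |ψ k i|²
    set q : Fin m → Fin n → ℝ := fun k i => ‖ψ k i‖ ^ 2 with hq
    have hqnn : ∀ k i, 0 ≤ q k i := fun k i => sq_nonneg _
    -- diagonal identity
    have hdiag : ∀ i, (ρ i i).re = ∑ k, p k * q k i := by
      intro i
      rw [hdec]
      have : (∑ k, (p k : ℂ) • Matrix.vecMulVec (ψ k) (star (ψ k))) i i
          = ∑ k, (p k : ℂ) * (ψ k i * (starRingEnd ℂ) (ψ k i)) := by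
        simp [Matrix.sum_apply, Matrix.vecMulVec_apply, Pi.star_apply]
      rw [this]
      rw [Complex.re_sum]
      refine Finset.sum_congr rfl fun k _ => ?_
      rw [Complex.mul_conj, Complex.normSq_eq_norm_sq,
        ← Complex.ofReal_mul, Complex.ofReal_re]
    -- each fiber's purity bound: Σ q² ≤ 1
    have hqle : ∀ k, ∑ i, (q k i) ^ 2 ≤ 1 := by
      intro k
      calc ∑ i, (q k i) ^ 2 ≤ ∑ i, q k i := by
            refine Finset.sum_le_sum fun i _ => ?_
            have h1 : q k i ≤ 1 := by
              have := Finset.single_le_sum (f := q k) (fun i _ => hqnn k i)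
                (Finset.mem_univ i)
              rw [hnorm k] at this; exact this
            nlinarith [hqnn k i]
        _ = 1 := hnorm k
    -- step 1: sqrt concavity
    have habs4 : ∀ k, (∑ i, ‖ψ k i‖ ^ 4) = ∑ i, (q k i) ^ 2 := by
      intro k; refine Finset.sum_congr rfl fun i _ => by ring
    have h1 : ∑ k, p k * Real.sqrt (2 * (1 - ∑ i, ‖ψ k i‖ ^ 4))
        ≤ Real.sqrt (∑ k, p k * (2 * (1 - ∑ i, (q k i) ^ 2))) := by
      have := sum_mul_sqrt_le p (fun k => 2 * (1 - ∑ i, (q k i) ^ 2)) hp hs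
        (fun k => by have := hqle k; linarith)
      simpa only [habs4] using this
    refine h1.trans (Real.sqrt_le_sqrt ?_)
    -- step 2: convexity of square, coordinatewise
    have h2 : ∑ i, (ρ i i).re ^ 2 ≤ ∑ k, p k * ∑ i, (q k i) ^ 2 := by
      calc ∑ i, (ρ i i).re ^ 2 ≤ ∑ i, ∑ k, p k * (q k i) ^ 2 :=
            Finset.sum_le_sum fun i _ => by
              rw [hdiag i]; exact sq_sum_le p (fun k => q k i) hp hs
        _ = ∑ k, p k * ∑ i, (q k i) ^ 2 := by
            rw [Finset.sum_comm]
            exact Finset.sum_congr rfl fun k _ => (Finset.mul_sum _ _ _).symm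
    have hexp : ∑ k, p k * (2 * (1 - ∑ i, (q k i) ^ 2))
        = 2 * (∑ k, p k) - 2 * ∑ k, p k * ∑ i, (q k i) ^ 2 := by
      rw [Finset.mul_sum, Finset.mul_sum, ← Finset.sum_sub_distrib]
      exact Finset.sum_congr rfl fun k _ => by ring
    rw [hexp, hs]
    linarith
  constructor
  · apply Real.sSup_le
    · rintro x ⟨m, p, ψ, hp, hs, hnorm, hdec, rfl⟩
      exact main m p ψ hp hs hnorm hdec
    · exact Real.sqrt_nonneg _
  · exact main
end
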